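/- arXiv:math/0703213 — 6 statements merged into one kernel-verified Lean document; each statement's English description precedes it below -/
import Mathlib

section
/- Let A be an m×m matrix with entries in a commutative ring, let n < m, let A₀ be the top-left n×n submatrix, and for n < i,j ≤ m let b_{ij} be the determinant of the (n+1)×(n+1) matrix formed by bordering A₀ with row i (restricted to the first n columns), column j (restricted to the first n rows), and entry a_{ij}. Let B = (b_{ij})_{n+1 ≤ i,j ≤ m}. Then det(A) · (det A₀)^{m-n-1} = det B. -/
open Matrix

namespace Sylv

variable {R S : Type*} [CommRing R] [CommRing S] {m n : ℕ}

/-- row/col selector of the bordered matrix -/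
def brow (hn : n < m) (k : Fin (m - n)) : Fin (n + 1) → Fin m := fun r =>
  if h : (r : ℕ) < n then ⟨(r : ℕ), h.trans hn⟩ else ⟨n + (k : ℕ), by have := k.isLt; omega⟩

def lhs (hn : n < m) (A : Matrix (Fin m) (Fin m) R) : R :=
  A.det * (A.submatrix (Fin.castLE hn.le) (Fin.castLE hn.le)).det ^ (m - n - 1)

def rhs (hn : n < m) (A : Matrix (Fin m) (Fin m) R) : R :=
  (Matrix.of fun k l : Fin (m - n) => (A.submatrix (brow hn k) (brow hn l)).det).det

theorem lhs_map (f : R →+* S) (hn : n < m) (A : Matrix (Fin m) (Fin m) R) :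
    lhs hn (A.map f) = f (lhs hn A) := by
  simp only [lhs, _root_.map_mul, map_pow, RingHom.map_det, RingHom.mapMatrix_apply, submatrix_map]

theorem rhs_map (f : R →+* S) (hn : n < m) (A : Matrix (Fin m) (Fin m) R) :
    rhs hn (A.map f) = f (rhs hn A) := by
  rw [rhs, rhs, RingHom.map_det]
  congr 1
  ext k l
  simp only [RingHom.mapMatrix_apply, Matrix.map_apply, of_apply, RingHom.map_det, submatrix_map]


theorem key (hn : n < m) (A : Matrix (Fin m) (Fin m) R)
    (hu : IsUnit (A.submatrix (Fin.castLE hn.le) (Fin.castLE hn.le)).det) :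
    lhs hn A = rhs hn A := by
  set A₀ := A.submatrix (Fin.castLE hn.le) (Fin.castLE hn.le) with hA₀
  have : Invertible A₀ := A₀.invertibleOfIsUnitDet hu
  set e : Fin (m - n) → Fin m := fun k => ⟨n + (k : ℕ), by have := k.isLt; omega⟩ with he
  set A₁ : Matrix (Fin n) (Fin (m - n)) R := A.submatrix (Fin.castLE hn.le) e with hA₁
  set A₂ : Matrix (Fin (m - n)) (Fin n) R := A.submatrix e (Fin.castLE hn.le) with hA₂
  set A₃ : Matrix (Fin (m - n)) (Fin (m - n)) R := A.submatrix e e with hA₃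
  set S := A₃ - A₂ * ⅟A₀ * A₁ with hS
  have hmn : n + (m - n) = m := by omega
  have hdetA : A.det = A₀.det * S.det := by
    let σ : Fin n ⊕ Fin (m - n) ≃ Fin m := finSumFinEquiv.trans (finCongr hmn)
    have h1 : A.submatrix σ σ = fromBlocks A₀ A₁ A₂ A₃ := by
      ext i j
      cases i <;> cases j <;>
        first
          | rfl
          | simp [σ, fromBlocks, finSumFinEquiv_apply_left, finSumFinEquiv_apply_right,
              Fin.ext_iff, hA₀, hA₁, hA₂, hA₃, he]
    rw [← det_submatrix_equiv_self σ A, h1, det_fromBlocks₁₁, hS]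
  have hB : (Matrix.of fun k l : Fin (m - n) => (A.submatrix (brow hn k) (brow hn l)).det)
      = A₀.det • S := by
    ext k l
    have h2 : (A.submatrix (brow hn k) (brow hn l)).submatrix finSumFinEquiv finSumFinEquiv
        = fromBlocks A₀ (A.submatrix (Fin.castLE hn.le) (fun _ : Fin 1 => e l))
            (A.submatrix (fun _ : Fin 1 => e k) (Fin.castLE hn.le))
            (A.submatrix (fun _ : Fin 1 => e k) (fun _ : Fin 1 => e l)) := by
      ext i j
      cases i <;> cases j <;>
        (try rfl) <;>
        (try simp [fromBlocks, brow, finSumFinEquiv_apply_left, finSumFinEquiv_apply_right,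
              Fin.ext_iff, hA₀, he]) <;>
        rfl
    have h3 := det_submatrix_equiv_self (finSumFinEquiv (m := n) (n := 1))
      (A.submatrix (brow hn k) (brow hn l))
    rw [of_apply, ← h3, h2, det_fromBlocks₁₁]
    rw [det_fin_one]
    simp only [Matrix.smul_apply, hS, Matrix.sub_apply, mul_apply, submatrix_apply, smul_eq_mul,
      Fintype.univ_ofSubsingleton, hA₃, hA₂, hA₁, hA₀]
    try ring_nf
  have hcard : Fintype.card (Fin (m - n)) = m - n := Fintype.card_fin _
  rw [lhs, rhs, hB, det_smul, hdetA, hcard, ← hA₀]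
  have h4 : A₀.det ^ (m - n) = A₀.det ^ (m - n - 1) * A₀.det := by
    rw [← pow_succ]; congr 1; omega
  rw [h4]; ring


theorem general (hn : n < m) (A : Matrix (Fin m) (Fin m) R) : lhs hn A = rhs hn A := by
  classical
  -- generic matrix over σR := MvPolynomial (Fin m × Fin m) ℤ
  set σR := MvPolynomial (Fin m × Fin m) ℤ
  set M : Matrix (Fin m) (Fin m) σR := Matrix.mvPolynomialX (Fin m) (Fin m) ℤ with hM
  -- the top-left block has nonzero determinant
  have hA₀ : (M.submatrix (Fin.castLE hn.le) (Fin.castLE hn.le)).det ≠ 0 := by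
    have hsub : M.submatrix (Fin.castLE hn.le) (Fin.castLE hn.le)
        = (Matrix.mvPolynomialX (Fin n) (Fin n) ℤ).map
            (MvPolynomial.rename (Prod.map (Fin.castLE hn.le) (Fin.castLE hn.le))) := by
      ext i j
      simp [hM, MvPolynomial.rename_X, Prod.map]
    have hinj : Function.Injective
        (MvPolynomial.rename (R := ℤ) (Prod.map (Fin.castLE hn.le) (Fin.castLE hn.le))) :=
      MvPolynomial.rename_injective _ (fun p q h => by
        cases p; cases q
        simp only [Prod.map, Prod.mk.injEq] at h ⊢
        exact ⟨Fin.castLE_injective _ h.1, Fin.castLE_injective _ h.2⟩)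
    rw [hsub, ← AlgHom.mapMatrix_apply, ← AlgHom.map_det]
    intro h
    rw [show (0 : σR) = MvPolynomial.rename (Prod.map (Fin.castLE hn.le) (Fin.castLE hn.le)) 0
        by simp] at h
    exact Matrix.det_mvPolynomialX_ne_zero (Fin n) ℤ (hinj h)
  -- pass to the fraction field, where the identity holds by `key`
  let K := FractionRing σR
  let φ : σR →+* K := algebraMap σR K
  have hφ : Function.Injective φ := IsFractionRing.injective σR K
  have hKey : lhs hn (M.map φ) = rhs hn (M.map φ) := by
    apply key
    rw [submatrix_map, ← RingHom.mapMatrix_apply, ← RingHom.map_det]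
    exact isUnit_iff_ne_zero.mpr fun h => hA₀ (hφ (by simpa using h))
  have hgen : lhs hn M = rhs hn M := hφ (by rw [← lhs_map, ← rhs_map, hKey])
  -- specialize to A
  let ψ : σR →+* R := MvPolynomial.eval₂Hom (Int.castRingHom R) (fun p => A p.1 p.2)
  have hMA : M.map ψ = A := Matrix.mvPolynomialX_map_eval₂ _ A
  calc lhs hn A = lhs hn (M.map ψ) := by rw [hMA]
    _ = ψ (lhs hn M) := lhs_map ψ hn M
    _ = ψ (rhs hn M) := by rw [hgen]
    _ = rhs hn (M.map ψ) := (rhs_map ψ hn M).symm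
    _ = rhs hn A := by rw [hMA]

end Sylv


/-- Classical Sylvester determinantal identity (Bareiss form).
`A₀` is the top-left `n × n` block of the `m × m` matrix `A`; for indices
`i, j` with `n ≤ i, j < m` (0-indexed version of `n < i, j ≤ m`), `b i j` is the
determinant of the `(n+1) × (n+1)` matrix obtained by bordering `A₀` with row `i`
(restricted to the first `n` columns), column `j` (restricted to the first `n`
rows) and the entry `A i j`.  Then `det A * (det A₀)^(m-n-1) = det B`. -/
theorem sylvester_identity {R : Type*} [CommRing R] (m n : ℕ) (hn : n < m)
    (A : Matrix (Fin m) (Fin m) R) :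
    -- embedding of the "high" indices n, n+1, ..., m-1
    let e : Fin (m - n) → Fin m := fun k => ⟨n + (k : ℕ), by have := k.isLt; omega⟩
    -- row/column index system of the bordered matrix: 0, 1, ..., n-1, i
    let bi : Fin m → Fin (n + 1) → Fin m := fun i r =>
      if h : (r : ℕ) < n then ⟨(r : ℕ), h.trans hn⟩ else i
    -- the top-left n × n submatrix
    let A₀ : Matrix (Fin n) (Fin n) R := A.submatrix (Fin.castLE hn.le) (Fin.castLE hn.le)
    -- B, the matrix of bordered determinants
    let B : Matrix (Fin (m - n)) (Fin (m - n)) R :=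
      Matrix.of fun k l => (A.submatrix (bi (e k)) (bi (e l))).det
    A.det * A₀.det ^ (m - n - 1) = B.det := by
  exact Sylv.general hn A
end

section
/- Let A = (a_{ij})_{m×m} be a Cartier-Foata matrix (entries in a noncommutative ring satisfying a_{ik}a_{jl} = a_{jl}a_{ik} for i ≠ j). Then for all i,j, ((I-A)^{-1})_{ij} = (-1)^{i+j} (det(I-A))^{-1} · det((I-A)^{ji}), where det is the noncommutative determinant det B = Σ_{σ∈S_m} (-1)^{inv σ} b_{σ(1)1}⋯b_{σ(m)m} and (I-A)^{ji} denotes I-A with row j and column i removed. -/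
/-- The non-commutative (column-expansion) determinant
`det B = Σ_σ (-1)^{inv σ} b_{σ(1)1} b_{σ(2)2} ⋯ b_{σ(m)m}`. -/
noncomputable def ncdet {R : Type*} [Ring R] {k : ℕ} (B : Matrix (Fin k) (Fin k) R) : R :=
  ∑ σ : Equiv.Perm (Fin k),
    ((Equiv.Perm.sign σ : ℤ)) • (List.ofFn fun j => B (σ j) j).prod

open MvPolynomial

namespace CFaux
open scoped Classical

variable {R : Type*} [Ring R] {n : ℕ}

/-- Evaluation of a monomial: the (noncommutative) product of the matrix entries
`B p.1 p.2` over the multiset of variables, when they pairwise commute; junk `0` otherwise. -/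
noncomputable def phim (B : Matrix (Fin n) (Fin n) R) (d : (Fin n × Fin n) →₀ ℕ) : R :=
  if h : {x | x ∈ (Finsupp.toMultiset d).map fun p => B p.1 p.2}.Pairwise Commute
  then Multiset.noncommProd _ h else 0

/-- Linear evaluation of polynomials. -/
noncomputable def phi (B : Matrix (Fin n) (Fin n) R) (f : MvPolynomial (Fin n × Fin n) ℤ) : R :=
  ∑ dd ∈ f.support, f.coeff dd • phim B dd

theorem phi_sum_superset (B : Matrix (Fin n) (Fin n) R) {f : MvPolynomial (Fin n × Fin n) ℤ}
    {s : Finset ((Fin n × Fin n) →₀ ℕ)} (hs : f.support ⊆ s) :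
    phi B f = ∑ dd ∈ s, f.coeff dd • phim B dd := by
  refine Finset.sum_subset hs fun dd _ hdd => ?_
  rw [MvPolynomial.notMem_support_iff.mp hdd, zero_smul]

theorem phi_add (B : Matrix (Fin n) (Fin n) R) (f g : MvPolynomial (Fin n × Fin n) ℤ) :
    phi B (f + g) = phi B f + phi B g := by
  classical
  rw [phi_sum_superset B (s := f.support ∪ g.support)
      (MvPolynomial.support_add ..),
    phi_sum_superset B (s := f.support ∪ g.support) Finset.subset_union_left,
    phi_sum_superset B (s := f.support ∪ g.support) Finset.subset_union_right,
    ← Finset.sum_add_distrib]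
  simp [MvPolynomial.coeff_add, add_smul]

theorem phi_smul (B : Matrix (Fin n) (Fin n) R) (c : ℤ) (f : MvPolynomial (Fin n × Fin n) ℤ) :
    phi B (c • f) = c • phi B f := by
  rw [phi_sum_superset B (s := f.support) MvPolynomial.support_smul, phi, Finset.smul_sum]
  refine Finset.sum_congr rfl fun dd _ => ?_
  rw [MvPolynomial.coeff_smul, smul_eq_mul, mul_smul]

theorem phi_monomial (B : Matrix (Fin n) (Fin n) R) (d : (Fin n × Fin n) →₀ ℕ) (c : ℤ) :
    phi B (MvPolynomial.monomial d c) = c • phim B d := by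
  classical
  rw [phi_sum_superset B (s := {d}) (by rw [MvPolynomial.support_monomial]; split <;> simp)]
  simp [MvPolynomial.coeff_monomial]

theorem phi_zero (B : Matrix (Fin n) (Fin n) R) : phi B 0 = 0 := by simp [phi]

/-- `phi` as an additive monoid hom. -/
noncomputable def phiHom (B : Matrix (Fin n) (Fin n) R) :
    MvPolynomial (Fin n × Fin n) ℤ →+ R :=
  AddMonoidHom.mk' (phi B) (phi_add B)

theorem phi_eq (B : Matrix (Fin n) (Fin n) R) : phi B = ⇑(phiHom B) := rfl

theorem prod_X_eq_monomial (ps : List (Fin n × Fin n)) :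
    (ps.map X).prod
      = MvPolynomial.monomial ((ps.map fun p => Finsupp.single p 1).sum) (1 : ℤ) := by
  induction ps with
  | nil => simp [MvPolynomial.monomial_zero']
  | cons p ps ih =>
    rw [List.map_cons, List.prod_cons, ih, List.map_cons, List.sum_cons,
      ← pow_one (X p : MvPolynomial (Fin n × Fin n) ℤ), MvPolynomial.X_pow_eq_monomial,
      MvPolynomial.monomial_mul, one_mul]

theorem toMultiset_sum_single (ps : List (Fin n × Fin n)) :
    Finsupp.toMultiset ((ps.map fun p => Finsupp.single p (1 : ℕ)).sum) = (↑ps : Multiset _) := by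
  induction ps with
  | nil => simp
  | cons p ps ih =>
    rw [List.map_cons, List.sum_cons, map_add, ih, Finsupp.toMultiset_single, one_nsmul]
    exact Multiset.cons_coe p ps ▸ rfl

theorem phi_prod_X (B : Matrix (Fin n) (Fin n) R)
    (hB : ∀ i j k l : Fin n, i ≠ j → Commute (B i k) (B j l))
    (ps : List (Fin n × Fin n)) (hps : (ps.map Prod.fst).Nodup) :
    phi B ((ps.map X).prod) = (ps.map fun p => B p.1 p.2).prod := by
  have hcomm : {x | x ∈ ((↑(ps.map fun p => B p.1 p.2) : Multiset R))}.Pairwise Commute := by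
    intro x hx y hy hxy
    rw [Set.mem_setOf_eq, Multiset.mem_coe, List.mem_map] at hx hy
    obtain ⟨p, hp, rfl⟩ := hx
    obtain ⟨q, hq, rfl⟩ := hy
    have hpq : p.1 ≠ q.1 := fun h => hxy (by rw [List.inj_on_of_nodup_map hps hp hq h])
    exact hB _ _ _ _ hpq
  rw [prod_X_eq_monomial, phi_monomial, one_smul, phim]
  simp only [toMultiset_sum_single, Multiset.map_coe]
  rw [dif_pos hcomm, Multiset.noncommProd_coe]

theorem phi_det_mul_prod (B : Matrix (Fin n) (Fin n) R)
    (hB : ∀ i j k l : Fin n, i ≠ j → Commute (B i k) (B j l)) {k : ℕ}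
    (f g : Fin k → Fin n) (hf : Function.Injective f)
    (qs : List (Fin n × Fin n)) (hqs : (qs.map Prod.fst).Nodup)
    (hdisj : ∀ c, ∀ q ∈ qs, f c ≠ q.1) :
    phi B ((Matrix.of fun r c => X (f r, g c) :
        Matrix (Fin k) (Fin k) (MvPolynomial (Fin n × Fin n) ℤ)).det * (qs.map X).prod)
      = ncdet (Matrix.of fun r c => B (f r) (g c)) * (qs.map fun p => B p.1 p.2).prod := by
  classical
  rw [Matrix.det_apply, Finset.sum_mul, phi_eq, map_sum, ncdet, Finset.sum_mul]
  refine Finset.sum_congr rfl fun σ _ => ?_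
  rw [← phi_eq, Units.smul_def, smul_mul_assoc, phi_smul, smul_mul_assoc]
  congr 1
  have hps : (∏ c, (Matrix.of fun r c => X (f r, g c) :
        Matrix (Fin k) (Fin k) (MvPolynomial (Fin n × Fin n) ℤ)) (σ c) c) * (qs.map X).prod
      = ((((List.finRange k).map fun c => ((f (σ c), g c) : Fin n × Fin n)) ++ qs).map X).prod := by
    rw [List.map_append, List.prod_append, List.map_map]
    congr 1
  have hnd : (((((List.finRange k).map fun c => ((f (σ c), g c) : Fin n × Fin n)) ++ qs)).map
      Prod.fst).Nodup := by
    rw [List.map_append, List.nodup_append, List.map_map]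
    refine ⟨List.Nodup.map ?_ (List.nodup_finRange k), hqs, ?_⟩
    · exact fun c c' h => σ.injective (hf h)
    · intro x hx y hx' hxy
      rw [List.mem_map] at hx hx'
      obtain ⟨c, -, rfl⟩ := hx
      obtain ⟨q, hq, hq'⟩ := hx'
      exact hdisj (σ c) q hq (by subst hq'; simpa using hxy)
  rw [hps, phi_prod_X B hB _ hnd, List.map_append, List.prod_append]
  congr 1
  rw [List.map_map, List.ofFn_eq_map]
  rfl

theorem phi_det (B : Matrix (Fin n) (Fin n) R)
    (hB : ∀ i j k l : Fin n, i ≠ j → Commute (B i k) (B j l)) :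
    phi B (Matrix.of fun p q : Fin n => X ((p, q) : Fin n × Fin n) :
        Matrix (Fin n) (Fin n) (MvPolynomial (Fin n × Fin n) ℤ)).det = ncdet B := by
  have h := phi_det_mul_prod B hB id id Function.injective_id [] List.nodup_nil (by simp)
  simp at h; exact h

theorem expansion (m : ℕ) (B : Matrix (Fin (m+1)) (Fin (m+1)) R)
    (hB : ∀ i j k l : Fin (m+1), i ≠ j → Commute (B i k) (B j l)) (i l : Fin (m+1)) :
    ∑ j : Fin (m+1), ((-1:ℤ)^((j:ℕ)+(i:ℕ))) • (ncdet (B.submatrix j.succAbove i.succAbove) * B j l)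
      = if i = l then ncdet B else 0 := by
  classical
  set M : Matrix (Fin (m+1)) (Fin (m+1)) (MvPolynomial (Fin (m+1) × Fin (m+1)) ℤ) :=
    Matrix.of fun p q => X (p, q) with hM
  have key : phi B ((Matrix.adjugate M * M) i l) = phi B ((M.det • (1 : Matrix _ _ _)) i l) := by
    rw [Matrix.adjugate_mul]
  rw [Matrix.mul_apply, phi_eq, map_sum] at key
  have hterm : ∀ j, (phiHom B) (Matrix.adjugate M i j * M j l)
      = ((-1:ℤ)^((j:ℕ)+(i:ℕ))) • (ncdet (B.submatrix j.succAbove i.succAbove) * B j l) := by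
    intro j
    show phi B _ = _
    rw [Matrix.adjugate_fin_succ_eq_det_submatrix]
    have h1 : ((-1 : MvPolynomial (Fin (m+1) × Fin (m+1)) ℤ) ^ ((j:ℕ)+(i:ℕ)) *
          (M.submatrix j.succAbove i.succAbove).det) * M j l
        = ((-1:ℤ)^((j:ℕ)+(i:ℕ))) • ((M.submatrix j.succAbove i.succAbove).det * M j l) := by
      rw [zsmul_eq_mul, mul_assoc]
      push_cast
      ring
    rw [h1, phi_smul]
    congr 1
    have hXjl : M j l = ([((j, l) : Fin (m+1) × Fin (m+1))].map X).prod := by simp [hM]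
    have hsub : M.submatrix j.succAbove i.succAbove
        = Matrix.of fun r c => X (j.succAbove r, i.succAbove c) := rfl
    rw [hsub, hXjl,
      phi_det_mul_prod B hB _ _ (Fin.succAbove_right_injective (p := j)) _
        (by simp) (by rintro c q hq; simp at hq; subst hq; exact Fin.succAbove_ne j c)]
    simp [Matrix.submatrix]
  rw [Finset.sum_congr rfl fun j _ => hterm j] at key
  rw [key, Matrix.smul_apply, Matrix.one_apply]
  split_ifs with h
  · rw [smul_eq_mul, mul_one]
    exact phi_det B hB

  · rw [smul_zero]
    exact map_zero _

end CFaux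

/-- Cartier–Foata master-theorem-type inversion formula: for a Cartier–Foata matrix `A`
(`a_{ik} a_{jl} = a_{jl} a_{ik}` for `i ≠ j`), with `X` a two-sided inverse of `I - A`
and `d` a two-sided inverse of `det (I - A)` (both exist in the completed algebra),
`((I-A)⁻¹)_{ij} = (-1)^{i+j} (det (I-A))⁻¹ · det ((I-A)^{ji})`,
where `(I-A)^{ji}` is `I - A` with row `j` and column `i` removed. -/
theorem cartier_foata_inverse_entries {R : Type*} [Ring R] (m : ℕ)
    (a : Matrix (Fin (m + 1)) (Fin (m + 1)) R)
    (hcf : ∀ i j k l : Fin (m + 1), i ≠ j → a i k * a j l = a j l * a i k)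
    (X : Matrix (Fin (m + 1)) (Fin (m + 1)) R)
    (hX1 : (1 - a) * X = 1) (hX2 : X * (1 - a) = 1)
    (d : R) (hd1 : d * ncdet (1 - a) = 1) (hd2 : ncdet (1 - a) * d = 1) :
    ∀ i j : Fin (m + 1),
      X i j = ((-1 : ℤ) ^ ((i : ℕ) + (j : ℕ))) •
        (d * ncdet ((1 - a).submatrix j.succAbove i.succAbove)) := by
  classical
  intro i j
  set B : Matrix (Fin (m + 1)) (Fin (m + 1)) R := 1 - a with hBdef
  have hone : ∀ (p k : Fin (m + 1)) (x : R), Commute ((1 : Matrix (Fin (m+1)) (Fin (m+1)) R) p k) x := by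
    intro p k x
    rw [Matrix.one_apply]
    split
    · exact Commute.one_left x
    · exact Commute.zero_left x
  have hB : ∀ i j k l : Fin (m + 1), i ≠ j → Commute (B i k) (B j l) := by
    intro p q k l hpq
    have h1 : Commute (a p k) (a q l) := hcf p q k l hpq
    have h2 : Commute (a p k) ((1 : Matrix (Fin (m+1)) (Fin (m+1)) R) q l - a q l) :=
      Commute.sub_right (hone q l (a p k)).symm h1
    have h3 : Commute ((1 : Matrix (Fin (m+1)) (Fin (m+1)) R) p k)
        ((1 : Matrix (Fin (m+1)) (Fin (m+1)) R) q l - a q l) := hone p k _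
    have h4 := Commute.sub_left h3 h2
    rw [hBdef, Matrix.sub_apply, Matrix.sub_apply]; exact h4
  have hexp := CFaux.expansion m B hB
  set Y : Matrix (Fin (m + 1)) (Fin (m + 1)) R := Matrix.of fun i j =>
    ((-1 : ℤ) ^ ((i : ℕ) + (j : ℕ))) • (d * ncdet (B.submatrix j.succAbove i.succAbove))
    with hYdef
  have hYB : Y * B = 1 := by
    ext p l
    rw [Matrix.mul_apply]
    have hterm : ∀ q, Y p q * B q l
        = d * (((-1:ℤ)^((q:ℕ)+(p:ℕ))) • (ncdet (B.submatrix q.succAbove p.succAbove) * B q l)) := by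
      intro q
      show (((-1 : ℤ) ^ ((p : ℕ) + (q : ℕ))) •
          (d * ncdet (B.submatrix q.succAbove p.succAbove))) * B q l = _
      rw [smul_mul_assoc, mul_assoc, ← mul_smul_comm, add_comm (p : ℕ) (q : ℕ)]
    rw [Finset.sum_congr rfl fun q _ => hterm q, ← Finset.mul_sum, hexp p l, Matrix.one_apply]
    split_ifs with h
    · exact hd1
    · rw [mul_zero]
  have hY : Y = X := by
    calc Y = Y * ((1 - a) * X) := by rw [hX1, mul_one]
    _ = (Y * (1 - a)) * X := by rw [Matrix.mul_assoc]
    _ = X := by rw [← hBdef, hYB, one_mul]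
  rw [← hY]
  rfl
end

section
/- Let A = (a_{ij})_{m×m} be a right-quantum matrix: a_{jk}a_{ik} = a_{ik}a_{jk} for i ≠ j, and a_{ik}a_{jl} - a_{jk}a_{il} = a_{jl}a_{ik} - a_{il}a_{jk} for i ≠ j, k ≠ l. Then ((I-A)^{-1})_{ij} = (-1)^{i+j} (det(I-A))^{-1} · det((I-A)^{ji}) for all i,j, with det the column-expansion noncommutative determinant. -/
set_option maxHeartbeats 1000000

section RQProof

section Aux

lemma ofFn_prod_split {R : Type*} [Ring R] {n : ℕ} (F : Fin n → R) (p : ℕ) (hp : p + 1 < n) :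
    (List.ofFn F).prod =
      ((List.ofFn F).take p).prod *
        (F ⟨p, by omega⟩ * (F ⟨p + 1, hp⟩ * ((List.ofFn F).drop (p + 2)).prod)) := by
  have hlen : (List.ofFn F).length = n := List.length_ofFn
  have h1 : p < (List.ofFn F).length := by omega
  have h2 : p + 1 < (List.ofFn F).length := by omega
  rw [← List.prod_take_mul_prod_drop (List.ofFn F) p,
    List.drop_eq_getElem_cons h1, List.drop_eq_getElem_cons h2,
    List.prod_cons, List.prod_cons, List.getElem_ofFn, List.getElem_ofFn]

lemma ofFn_take_congr {α : Type*} {n : ℕ} (F G : Fin n → α) (p : ℕ)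
    (h : ∀ t : Fin n, (t : ℕ) < p → F t = G t) :
    (List.ofFn F).take p = (List.ofFn G).take p := by
  apply List.ext_getElem (by simp)
  intro i h1 h2
  simp only [List.getElem_take, List.getElem_ofFn]
  exact h _ (by simpa using h1 : (i:ℕ) < p ∧ i < n).1

lemma ofFn_drop_congr {α : Type*} {n : ℕ} (F G : Fin n → α) (p : ℕ)
    (h : ∀ t : Fin n, p ≤ (t : ℕ) → F t = G t) :
    (List.ofFn F).drop p = (List.ofFn G).drop p := by
  apply List.ext_getElem (by simp)
  intro i h1 h2
  simp only [List.getElem_drop, List.getElem_ofFn]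
  apply h
  simp [Nat.le_add_right]

end Aux

lemma split_pair {R : Type*} [Ring R] {n p : ℕ} (hp : p + 1 < n) (F G : Fin n → R)
    (hoff : ∀ t : Fin n, (t : ℕ) ≠ p → (t : ℕ) ≠ p + 1 → F t = G t) :
    (List.ofFn F).prod =
      ((List.ofFn G).take p).prod *
        (F ⟨p, by omega⟩ * (F ⟨p + 1, hp⟩ * ((List.ofFn G).drop (p + 2)).prod)) := by
  rw [ofFn_prod_split F p hp,
    ofFn_take_congr F G p (fun t ht => hoff t (by omega) (by omega)),
    ofFn_drop_congr F G (p + 2) (fun t ht => hoff t (by omega) (by omega))]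

def IsRQ {R : Type*} [Ring R] {n : ℕ} (B : Matrix (Fin n) (Fin n) R) : Prop :=
  (∀ i j k, i ≠ j → B j k * B i k = B i k * B j k) ∧
  (∀ i j k l, i ≠ j → k ≠ l →
    B i k * B j l - B j k * B i l = B j l * B i k - B i l * B j k)

lemma IsRQ.sub {R : Type*} [Ring R] {n : ℕ} {B : Matrix (Fin n) (Fin n) R} (hB : IsRQ B)
    (g : Fin n → Fin n) : IsRQ (B.submatrix id g) := by
  constructor
  · intro i j k hij
    exact hB.1 i j (g k) hij
  · intro i j k l hij hkl
    rcases eq_or_ne (g k) (g l) with h | h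
    · simp only [Matrix.submatrix_apply, id_eq, h]
      rw [hB.1 i j (g l) hij]
    · exact hB.2 i j (g k) (g l) hij h

open Equiv Equiv.Perm in
lemma ncdet_swap_adjacent {R : Type*} [Ring R] {n : ℕ} {B : Matrix (Fin n) (Fin n) R}
    (hB : IsRQ B) (p : ℕ) (hp : p + 1 < n) :
    ncdet (B.submatrix id (Equiv.swap (⟨p, by omega⟩ : Fin n) ⟨p + 1, hp⟩)) = - ncdet B := by
  set p0 : Fin n := ⟨p, by omega⟩ with hp0
  set p1 : Fin n := ⟨p + 1, hp⟩ with hp1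
  have hne : p0 ≠ p1 := by simp [hp0, hp1, Fin.ext_iff]
  set s := Equiv.swap p0 p1 with hs
  have hss : ∀ t, s (s t) = t := fun t => Equiv.swap_apply_self _ _ _
  have hsp0 : s p0 = p1 := Equiv.swap_apply_left _ _
  have hsp1 : s p1 = p0 := Equiv.swap_apply_right _ _
  have hsother : ∀ t : Fin n, t ≠ p0 → t ≠ p1 → s t = t := fun t h1 h2 =>
    Equiv.swap_apply_of_ne_of_ne h1 h2
  -- reindex the sum
  have hre : ncdet (B.submatrix id ⇑s) =
      ∑ σ : Equiv.Perm (Fin n),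
        (-(Equiv.Perm.sign σ : ℤ)) • (List.ofFn fun t => B (σ (s t)) (s t)).prod := by
    rw [ncdet, ← Equiv.sum_comp (Equiv.mulRight s)
      (fun σ : Equiv.Perm (Fin n) =>
        ((Equiv.Perm.sign σ : ℤ)) • (List.ofFn fun t => (B.submatrix id ⇑s) (σ t) t).prod)]
    apply Finset.sum_congr rfl
    intro σ _
    have hsgn : ((Equiv.Perm.sign (σ * s) : ℤ)) = -((Equiv.Perm.sign σ : ℤ)) := by
      rw [Equiv.Perm.sign_mul, Equiv.Perm.sign_swap hne]
      push_cast
      ring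
    simp only [Equiv.coe_mulRight, hsgn, Matrix.submatrix_apply, id_eq, Equiv.Perm.mul_apply]
  rw [hre, ncdet, eq_neg_iff_add_eq_zero, ← Finset.sum_add_distrib]
  apply Finset.sum_ninvolution (fun σ => σ * s)
  · intro σ
    have hz : ((Equiv.Perm.sign (σ * s) : ℤ)) = -((Equiv.Perm.sign σ : ℤ)) := by
      rw [Equiv.Perm.sign_mul, Equiv.Perm.sign_swap hne]
      push_cast; ring
    simp only [hz, Equiv.Perm.mul_apply, hss]
    set z : ℤ := ((Equiv.Perm.sign σ : ℤ)) with hzdef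
    set T : R := ((List.ofFn fun t => B (σ t) t).take p).prod with hT
    set D : R := ((List.ofFn fun t => B (σ t) t).drop (p + 2)).prod with hD
    have hu : σ p0 ≠ σ p1 := fun h => hne (σ.injective h)
    have hoff : ∀ (F : Fin n → R), (∀ t : Fin n, t ≠ p0 → t ≠ p1 → F t = B (σ t) t) →
        ∀ t : Fin n, (t : ℕ) ≠ p → (t : ℕ) ≠ p + 1 → F t = B (σ t) t := by
      intro F hF t h1 h2
      exact hF t (by simp [hp0, Fin.ext_iff, h1]) (by simp [hp1, Fin.ext_iff, h2])
    have hQ : (List.ofFn fun t => B (σ t) t).prod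
        = T * (B (σ p0) p0 * (B (σ p1) p1 * D)) := by
      rw [ofFn_prod_split (fun t => B (σ t) t) p hp]
    have hP : (List.ofFn fun t => B (σ (s t)) (s t)).prod
        = T * (B (σ p1) p1 * (B (σ p0) p0 * D)) := by
      rw [split_pair hp (fun t => B (σ (s t)) (s t)) (fun t => B (σ t) t)
        (hoff _ (fun t h1 h2 => by rw [hsother t h1 h2]))]
      rw [show s ⟨p, by omega⟩ = p1 from hsp0, show s ⟨p + 1, hp⟩ = p0 from hsp1]
    have hP' : (List.ofFn fun t => B (σ t) (s t)).prod
        = T * (B (σ p0) p1 * (B (σ p1) p0 * D)) := by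
      rw [split_pair hp (fun t => B (σ t) (s t)) (fun t => B (σ t) t)
        (hoff _ (fun t h1 h2 => by rw [hsother t h1 h2]))]
      rw [show s ⟨p, by omega⟩ = p1 from hsp0, show s ⟨p + 1, hp⟩ = p0 from hsp1]
    have hQ' : (List.ofFn fun t => B (σ (s t)) t).prod
        = T * (B (σ p1) p0 * (B (σ p0) p1 * D)) := by
      rw [split_pair hp (fun t => B (σ (s t)) t) (fun t => B (σ t) t)
        (hoff _ (fun t h1 h2 => by rw [hsother t h1 h2]))]
      rw [show s ⟨p, by omega⟩ = p1 from hsp0, show s ⟨p + 1, hp⟩ = p0 from hsp1]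
    rw [hQ, hP, hP', hQ']
    have hM : B (σ p0) p0 * B (σ p1) p1 - B (σ p1) p1 * B (σ p0) p0
        + B (σ p0) p1 * B (σ p1) p0 - B (σ p1) p0 * B (σ p0) p1 = 0 := by
      have h := hB.2 (σ p0) (σ p1) p0 p1 hu hne
      linear_combination (norm := abel) h
    have hkey : (z : R) * (T * ((B (σ p0) p0 * B (σ p1) p1 - B (σ p1) p1 * B (σ p0) p0
        + B (σ p0) p1 * B (σ p1) p0 - B (σ p1) p0 * B (σ p0) p1) * D)) = 0 := by
      rw [hM]
      simp
    simp only [zsmul_eq_mul]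
    push_cast
    linear_combination (norm := noncomm_ring) hkey
  · intro σ h heq
    exact hne (Equiv.swap_eq_one_iff.mp
      (mul_left_cancel (a := σ) (by rw [heq, mul_one] : σ * s = σ * 1)))
  · intro σ
    exact Finset.mem_univ _
  · intro σ
    exact Equiv.mul_swap_mul_self p0 p1 σ

lemma ncdet_swap_aux {R : Type*} [Ring R] {n : ℕ} :
    ∀ d : ℕ, ∀ {B : Matrix (Fin n) (Fin n) R}, IsRQ B → ∀ x y : Fin n,
      (x : ℕ) < (y : ℕ) → (y : ℕ) - (x : ℕ) = d →
      ncdet (B.submatrix id ⇑(Equiv.swap x y)) = - ncdet B := by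
  intro d
  induction d using Nat.strong_induction_on with
  | _ d IH =>
    intro B hB x y hlt hd
    have hxy : x ≠ y := by
      intro h; rw [h] at hlt; omega
    rcases Nat.lt_or_ge 1 d with h1 | h1
    · -- distance at least 2
      have hwlt : (x : ℕ) + 1 < n := by have := y.isLt; omega
      set w : Fin n := ⟨(x : ℕ) + 1, hwlt⟩ with hw
      have hxw : x ≠ w := by simp [Fin.ext_iff, hw]
      have hwy : (w : ℕ) < (y : ℕ) := by simp [hw]; omega
      have hswap : Equiv.swap w y * Equiv.swap x w * Equiv.swap w y = Equiv.swap x y := by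
        rw [Equiv.swap_mul_swap_mul_swap hxw hxy, Equiv.swap_comm]
      have hcomp : B.submatrix id ⇑(Equiv.swap x y) =
          (((B.submatrix id ⇑(Equiv.swap w y)).submatrix id ⇑(Equiv.swap x w)).submatrix
            id ⇑(Equiv.swap w y)) := by
        rw [Matrix.submatrix_submatrix, Matrix.submatrix_submatrix, ← hswap]
        rfl
      have hB1 : IsRQ (B.submatrix id ⇑(Equiv.swap w y)) := hB.sub _
      have hB2 : IsRQ ((B.submatrix id ⇑(Equiv.swap w y)).submatrix id ⇑(Equiv.swap x w)) :=
        hB1.sub _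
      rw [hcomp, IH (d - 1) (by omega) hB2 w y hwy (by simp [hw]; omega)]
      have hadj : ncdet ((B.submatrix id ⇑(Equiv.swap w y)).submatrix id ⇑(Equiv.swap x w)) =
          - ncdet (B.submatrix id ⇑(Equiv.swap w y)) :=
        ncdet_swap_adjacent hB1 (x : ℕ) hwlt
      rw [hadj, IH (d - 1) (by omega) hB w y hwy (by simp [hw]; omega)]
      simp
    · -- adjacent
      have hd1 : (y : ℕ) = (x : ℕ) + 1 := by omega
      have hy : y = ⟨(x : ℕ) + 1, hd1 ▸ y.isLt⟩ := by
        apply Fin.ext; simp [hd1]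
      rw [hy]
      exact ncdet_swap_adjacent hB (x : ℕ) (hd1 ▸ y.isLt)

lemma ncdet_col_swap {R : Type*} [Ring R] {n : ℕ} {B : Matrix (Fin n) (Fin n) R}
    (hB : IsRQ B) {x y : Fin n} (hxy : x ≠ y) :
    ncdet (B.submatrix id ⇑(Equiv.swap x y)) = - ncdet B := by
  rcases Nat.lt_or_ge (x : ℕ) (y : ℕ) with h | h
  · exact ncdet_swap_aux _ hB x y h rfl
  · have h' : (y : ℕ) < (x : ℕ) := by
      rcases Nat.lt_or_ge (y : ℕ) (x : ℕ) with h2 | h2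
      · exact h2
      · exact absurd (Fin.ext (by omega)) hxy
    rw [Equiv.swap_comm]
    exact ncdet_swap_aux _ hB y x h' rfl

lemma ncdet_col_perm {R : Type*} [Ring R] {n : ℕ} (τ : Equiv.Perm (Fin n)) :
    ∀ B : Matrix (Fin n) (Fin n) R, IsRQ B →
      ncdet (B.submatrix id ⇑τ) = ((Equiv.Perm.sign τ : ℤ)) • ncdet B := by
  refine Equiv.Perm.swap_induction_on τ ?_ ?_
  · intro B hB
    simp [Equiv.Perm.coe_one, Matrix.submatrix_id_id]
  · intro f x y hxy IH B hB
    have hcomp : B.submatrix id ⇑(Equiv.swap x y * f) =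
        (B.submatrix id ⇑(Equiv.swap x y)).submatrix id ⇑f := by
      rw [Matrix.submatrix_submatrix]; rfl
    rw [hcomp, IH _ (hB.sub _), ncdet_col_swap hB hxy, Equiv.Perm.sign_mul,
      Equiv.Perm.sign_swap hxy]
    push_cast
    rw [smul_neg, ← neg_smul]
    ring_nf

lemma ncdet_eq_cols_adjacent {R : Type*} [Ring R] {n : ℕ} {B : Matrix (Fin n) (Fin n) R}
    (hB : IsRQ B) (p : ℕ) (hp : p + 1 < n)
    (hcol : ∀ r, B r ⟨p, by omega⟩ = B r ⟨p + 1, hp⟩) : ncdet B = 0 := by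
  set p0 : Fin n := ⟨p, by omega⟩ with hp0
  set p1 : Fin n := ⟨p + 1, hp⟩ with hp1
  have hne : p0 ≠ p1 := by simp [hp0, hp1, Fin.ext_iff]
  set s := Equiv.swap p0 p1 with hs
  have hss : ∀ t, s (s t) = t := fun t => Equiv.swap_apply_self _ _ _
  have hsp0 : s p0 = p1 := Equiv.swap_apply_left _ _
  have hsp1 : s p1 = p0 := Equiv.swap_apply_right _ _
  have hsother : ∀ t : Fin n, t ≠ p0 → t ≠ p1 → s t = t := fun t h1 h2 =>
    Equiv.swap_apply_of_ne_of_ne h1 h2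
  rw [ncdet]
  apply Finset.sum_ninvolution (fun σ => σ * s)
  · intro σ
    have hz : ((Equiv.Perm.sign (σ * s) : ℤ)) = -((Equiv.Perm.sign σ : ℤ)) := by
      rw [Equiv.Perm.sign_mul, Equiv.Perm.sign_swap hne]
      push_cast; ring
    simp only [hz, Equiv.Perm.mul_apply]
    set z : ℤ := ((Equiv.Perm.sign σ : ℤ)) with hzdef
    set T : R := ((List.ofFn fun t => B (σ t) t).take p).prod with hT
    set D : R := ((List.ofFn fun t => B (σ t) t).drop (p + 2)).prod with hD
    have hu : σ p0 ≠ σ p1 := fun h => hne (σ.injective h)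
    have hoff : ∀ (F : Fin n → R), (∀ t : Fin n, t ≠ p0 → t ≠ p1 → F t = B (σ t) t) →
        ∀ t : Fin n, (t : ℕ) ≠ p → (t : ℕ) ≠ p + 1 → F t = B (σ t) t := by
      intro F hF t h1 h2
      exact hF t (by simp [hp0, Fin.ext_iff, h1]) (by simp [hp1, Fin.ext_iff, h2])
    have hQ : (List.ofFn fun t => B (σ t) t).prod
        = T * (B (σ p0) p0 * (B (σ p1) p0 * D)) := by
      rw [ofFn_prod_split (fun t => B (σ t) t) p hp]
      rw [show B (σ p1) p1 = B (σ p1) p0 from (hcol (σ p1)).symm]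
    have hQ' : (List.ofFn fun t => B (σ (s t)) t).prod
        = T * (B (σ p1) p0 * (B (σ p0) p0 * D)) := by
      rw [split_pair hp (fun t => B (σ (s t)) t) (fun t => B (σ t) t)
        (hoff _ (fun t h1 h2 => by rw [hsother t h1 h2]))]
      rw [show s ⟨p, by omega⟩ = p1 from hsp0, show s ⟨p + 1, hp⟩ = p0 from hsp1]
      rw [show B (σ p0) p1 = B (σ p0) p0 from (hcol (σ p0)).symm]
    rw [hQ, hQ']
    have hM : B (σ p1) p0 * B (σ p0) p0 = B (σ p0) p0 * B (σ p1) p0 :=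
      hB.1 (σ p0) (σ p1) p0 hu
    have hkey : (z : R) * (T * ((B (σ p0) p0 * B (σ p1) p0
        - B (σ p1) p0 * B (σ p0) p0) * D)) = 0 := by
      rw [show B (σ p0) p0 * B (σ p1) p0 - B (σ p1) p0 * B (σ p0) p0 = 0 by
        rw [← hM]; exact sub_self _]
      simp
    simp only [zsmul_eq_mul]
    push_cast
    linear_combination (norm := noncomm_ring) hkey
  · intro σ h heq
    exact hne (Equiv.swap_eq_one_iff.mp
      (mul_left_cancel (a := σ) (by rw [heq, mul_one] : σ * s = σ * 1)))
  · intro σ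
    exact Finset.mem_univ _
  · intro σ
    exact Equiv.mul_swap_mul_self p0 p1 σ

lemma ncdet_eq_cols {R : Type*} [Ring R] {n : ℕ} {B : Matrix (Fin n) (Fin n) R}
    (hB : IsRQ B) {c c' : Fin n} (hcc : c ≠ c') (hcol : ∀ r, B r c = B r c') :
    ncdet B = 0 := by
  have hn : 1 < n := by
    by_contra h
    exact hcc (Fin.ext (by omega))
  set z0 : Fin n := ⟨0, by omega⟩ with hz0
  set z1 : Fin n := ⟨1, hn⟩ with hz1
  have h01 : z0 ≠ z1 := by simp [hz0, hz1, Fin.ext_iff]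
  set c'' : Fin n := Equiv.swap z0 c c' with hc''def
  have hc''0 : c'' ≠ z0 := by
    intro h
    have h2 : (Equiv.swap z0 c) c' = (Equiv.swap z0 c) c := by
      rw [Equiv.swap_apply_right, ← hc''def, h]
    exact hcc ((Equiv.swap z0 c).injective h2).symm
  set τ : Equiv.Perm (Fin n) := Equiv.swap z0 c * Equiv.swap z1 c'' with hτ
  have ht0 : τ z0 = c := by
    rw [hτ]
    simp only [Equiv.Perm.mul_apply]
    rw [Equiv.swap_apply_of_ne_of_ne h01 (Ne.symm hc''0), Equiv.swap_apply_left]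
  have ht1 : τ z1 = c' := by
    rw [hτ]
    simp only [Equiv.Perm.mul_apply]
    rw [Equiv.swap_apply_left, hc''def, Equiv.swap_apply_self]
  have h := ncdet_col_perm τ B hB
  have hzero : ncdet (B.submatrix id ⇑τ) = 0 := by
    apply ncdet_eq_cols_adjacent (hB.sub ⇑τ) 0 hn
    intro r
    show B r (τ ⟨0, by omega⟩) = B r (τ ⟨1, hn⟩)
    rw [show (⟨0, by omega⟩ : Fin n) = z0 from rfl, show (⟨1, hn⟩ : Fin n) = z1 from rfl,
      ht0, ht1]
    exact hcol r
  rw [hzero] at h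
  rcases Int.units_eq_one_or (Equiv.Perm.sign τ) with hsg | hsg <;> rw [hsg] at h
  · simpa using h.symm
  · have : (((-1 : ℤˣ) : ℤ)) • ncdet B = - ncdet B := by push_cast; simp
    rw [this] at h
    simpa using h.symm

section Expand
variable {m : ℕ}

/-- Permutation sending `last` to `k` and `castSucc t` to `k.succAbove t`. -/
noncomputable def lastMover (k : Fin (m + 1)) : Equiv.Perm (Fin (m + 1)) :=
  Fin.revPerm * (Fin.cycleRange k.rev)⁻¹ * Fin.revPerm

@[simp] lemma lastMover_last (k : Fin (m + 1)) : lastMover k (Fin.last m) = k := by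
  simp only [lastMover, Equiv.Perm.mul_apply]
  rw [show Fin.revPerm (Fin.last m) = 0 by simp [Fin.rev_last],
    show ((Fin.cycleRange k.rev)⁻¹ : Equiv.Perm (Fin (m+1))) 0 = k.rev from
      Fin.cycleRange_symm_zero k.rev]
  simp [Fin.rev_rev]

@[simp] lemma lastMover_castSucc (k : Fin (m + 1)) (t : Fin m) :
    lastMover k (Fin.castSucc t) = k.succAbove t := by
  simp only [lastMover, Equiv.Perm.mul_apply]
  rw [show Fin.revPerm (Fin.castSucc t) = (t.rev).succ by simp [Fin.rev_castSucc],
    show ((Fin.cycleRange k.rev)⁻¹ : Equiv.Perm (Fin (m+1))) (t.rev).succ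
      = k.rev.succAbove t.rev from Fin.cycleRange_symm_succ k.rev t.rev]
  show (k.rev.succAbove t.rev).rev = k.succAbove t
  rw [Fin.rev_succAbove, Fin.rev_rev, Fin.rev_rev]

lemma sign_lastMover (k : Fin (m + 1)) :
    Equiv.Perm.sign (lastMover k) = (-1) ^ ((k.rev : ℕ)) := by
  simp only [lastMover, Equiv.Perm.sign_mul, Equiv.Perm.sign_inv]
  rw [Fin.sign_cycleRange]
  have h2 : Equiv.Perm.sign (Fin.revPerm : Equiv.Perm (Fin (m+1)))
      * Equiv.Perm.sign (Fin.revPerm : Equiv.Perm (Fin (m+1))) = 1 := Int.units_mul_self _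
  rw [mul_right_comm, h2, one_mul]

/-- Extend a permutation of `Fin m` to `Fin (m+1)` fixing `last`. -/
noncomputable def extLast (π : Equiv.Perm (Fin m)) : Equiv.Perm (Fin (m + 1)) :=
  (finSuccEquivLast.symm).permCongr π.optionCongr

@[simp] lemma extLast_last (π : Equiv.Perm (Fin m)) : extLast π (Fin.last m) = Fin.last m := by
  simp [extLast, Equiv.permCongr_apply]

@[simp] lemma extLast_castSucc (π : Equiv.Perm (Fin m)) (t : Fin m) :
    extLast π (Fin.castSucc t) = Fin.castSucc (π t) := by
  simp [extLast, Equiv.permCongr_apply]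

lemma sign_extLast (π : Equiv.Perm (Fin m)) :
    Equiv.Perm.sign (extLast π) = Equiv.Perm.sign π := by
  rw [extLast, Equiv.Perm.sign_permCongr, Equiv.optionCongr_sign]

lemma lastDecomp_bijective :
    Function.Bijective (fun kπ : Fin (m + 1) × Equiv.Perm (Fin m) =>
      lastMover kπ.1 * extLast kπ.2) := by
  rw [Fintype.bijective_iff_injective_and_card]
  constructor
  · rintro ⟨k, π⟩ ⟨k', π'⟩ h
    have hk : k = k' := by
      have := congrArg (fun σ : Equiv.Perm (Fin (m+1)) => σ (Fin.last m)) h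
      simpa using this
    subst hk
    have hπ : extLast π = extLast π' := mul_left_cancel h
    have : π = π' := by
      apply Equiv.ext
      intro t
      have := congrArg (fun σ : Equiv.Perm (Fin (m+1)) => σ (Fin.castSucc t)) hπ
      simpa [Fin.castSucc_inj] using this
    rw [this]
  · simp [Fintype.card_perm, Nat.factorial_succ]

lemma ncdet_expand_last {R : Type*} [Ring R] (M : Matrix (Fin (m + 1)) (Fin (m + 1)) R) :
    ncdet M = ∑ k : Fin (m + 1), ((Equiv.Perm.sign (lastMover k) : ℤ)) •
      (ncdet (M.submatrix k.succAbove Fin.castSucc) * M k (Fin.last m)) := by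
  rw [ncdet, ← Equiv.sum_comp (Equiv.ofBijective _ lastDecomp_bijective)
    (fun σ : Equiv.Perm (Fin (m+1)) =>
      ((Equiv.Perm.sign σ : ℤ)) • (List.ofFn fun j => M (σ j) j).prod)]
  rw [Fintype.sum_prod_type]
  apply Finset.sum_congr rfl
  intro k _
  rw [ncdet, Finset.sum_mul, Finset.smul_sum]
  apply Finset.sum_congr rfl
  intro π _
  simp only [Equiv.ofBijective_apply]
  have hsgn : ((Equiv.Perm.sign (lastMover k * extLast π) : ℤ))
      = ((Equiv.Perm.sign (lastMover k) : ℤ)) * ((Equiv.Perm.sign π : ℤ)) := by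
    rw [Equiv.Perm.sign_mul, sign_extLast]
    push_cast
    ring
  have hprod : (List.ofFn fun j => M ((lastMover k * extLast π) j) j).prod
      = (List.ofFn fun t : Fin m =>
          (M.submatrix k.succAbove Fin.castSucc) (π t) t).prod * M k (Fin.last m) := by
    have hfun : (fun i : Fin m => M ((lastMover k * extLast π) (Fin.castSucc i)) (Fin.castSucc i))
        = fun t : Fin m => (M.submatrix k.succAbove Fin.castSucc) (π t) t := by
      funext t
      simp [Equiv.Perm.mul_apply]
    rw [List.ofFn_succ' (fun j => M ((lastMover k * extLast π) j) j), List.prod_concat, hfun]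
    congr 1
    simp [Equiv.Perm.mul_apply]
  rw [hsgn, hprod, mul_smul, smul_mul_assoc]
end Expand

lemma neg_one_pow_rev {m : ℕ} (a b : Fin (m + 1)) :
    (-1 : ℤ) ^ ((a.rev : ℕ) + (b.rev : ℕ)) = (-1 : ℤ) ^ ((a : ℕ) + (b : ℕ)) := by
  have ha := a.isLt
  have hb := b.isLt
  have hra : ((a.rev : ℕ)) = m + 1 - ((a : ℕ) + 1) := Fin.val_rev a
  have hrb : ((b.rev : ℕ)) = m + 1 - ((b : ℕ) + 1) := Fin.val_rev b
  rcases Nat.even_or_odd ((a : ℕ) + (b : ℕ)) with h | h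
  · rw [Even.neg_one_pow h, Even.neg_one_pow ?_]
    rw [Nat.even_iff] at h ⊢
    omega
  · rw [Odd.neg_one_pow h, Odd.neg_one_pow ?_]
    rw [Nat.odd_iff] at h ⊢
    omega

lemma ncdet_cofactor {R : Type*} [Ring R] {m : ℕ} {B : Matrix (Fin (m + 1)) (Fin (m + 1)) R}
    (hB : IsRQ B) (i j : Fin (m + 1)) :
    ∑ k : Fin (m + 1), ((-1 : ℤ) ^ ((i : ℕ) + (k : ℕ))) •
        (ncdet (B.submatrix k.succAbove i.succAbove) * B k j)
      = if i = j then ncdet B else 0 := by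
  classical
  set u : Fin (m + 1) → Fin (m + 1) := fun x => if x = i then j else x with hu
  set C := B.submatrix id u with hC
  have hCrq : IsRQ C := hB.sub u
  have hperm := ncdet_col_perm (lastMover i) C hCrq
  have hexp := ncdet_expand_last (C.submatrix id ⇑(lastMover i))
  have hlast : ∀ k, (C.submatrix id ⇑(lastMover i)) k (Fin.last m) = B k j := by
    intro k
    have : lastMover i (Fin.last m) = i := lastMover_last i
    simp [this, hC, hu]
  have hminor : ∀ k : Fin (m + 1),
      (C.submatrix id ⇑(lastMover i)).submatrix k.succAbove Fin.castSucc
        = B.submatrix k.succAbove i.succAbove := by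
    intro k
    ext t s
    have h1 : lastMover i (Fin.castSucc s) = i.succAbove s := lastMover_castSucc i s
    have h2 : i.succAbove s ≠ i := Fin.succAbove_ne i s
    simp [h1, hC, hu, h2]
  rw [hperm] at hexp
  simp only [hlast, hminor] at hexp
  -- multiply by the sign of (lastMover i)
  set s : ℤ := ((Equiv.Perm.sign (lastMover i) : ℤ)) with hs
  have hss : s * s = 1 := by
    rw [hs, ← Units.val_mul, Int.units_mul_self]
    rfl
  have hC0 : ncdet C = s • ∑ k : Fin (m + 1), ((Equiv.Perm.sign (lastMover k) : ℤ)) •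
      (ncdet (B.submatrix k.succAbove i.succAbove) * B k j) := by
    rw [← hexp, smul_smul, hss, one_smul]
  rw [Finset.smul_sum] at hC0
  have hsgn : ∀ k : Fin (m + 1),
      s • (((Equiv.Perm.sign (lastMover k) : ℤ)) •
        (ncdet (B.submatrix k.succAbove i.succAbove) * B k j))
      = ((-1 : ℤ) ^ ((i : ℕ) + (k : ℕ))) •
        (ncdet (B.submatrix k.succAbove i.succAbove) * B k j) := by
    intro k
    rw [smul_smul]
    congr 1
    rw [hs, sign_lastMover, sign_lastMover]
    push_cast
    rw [← pow_add]
    exact neg_one_pow_rev i k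
  simp only [hsgn] at hC0
  rw [← hC0]
  -- now compute ncdet C
  by_cases hij : i = j
  · subst hij
    have : u = id := by
      funext x
      simp [hu]
      intro h; exact h.symm
    rw [if_pos rfl, hC, this, Matrix.submatrix_id_id]
  · rw [if_neg hij]
    apply ncdet_eq_cols hCrq hij
    intro r
    have h1 : C r i = B r j := by simp [hC, hu]
    have h2 : C r j = B r j := by simp [hC, hu, Ne.symm hij]
    rw [h1, h2]

lemma one_sub_isRQ {R : Type*} [Ring R] {n : ℕ} (a : Matrix (Fin n) (Fin n) R)
    (hrq1 : ∀ i j k : Fin n, i ≠ j → a j k * a i k = a i k * a j k)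
    (hrq2 : ∀ i j k l : Fin n, i ≠ j → k ≠ l →
      a i k * a j l - a j k * a i l = a j l * a i k - a i l * a j k) :
    IsRQ ((1 : Matrix (Fin n) (Fin n) R) - a) := by
  constructor
  · intro i j k hij
    have h := hrq1 i j k hij
    simp only [Matrix.sub_apply, Matrix.one_apply]
    split_ifs <;>
      first
        | (exfalso; exact hij (by grind))
        | linear_combination (norm := noncomm_ring) h
  · intro i j k l hij hkl
    have h := hrq2 i j k l hij hkl
    simp only [Matrix.sub_apply, Matrix.one_apply]
    split_ifs <;>
      first
        | (exfalso; first | exact hij (by grind) | exact hkl (by grind))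
        | linear_combination (norm := noncomm_ring) h

end RQProof

/-- Right-quantum inversion formula: for a right-quantum matrix `A`
with `X` a two-sided inverse of `I - A`
and `d` a two-sided inverse of `det (I - A)` (both exist in the completed algebra),
`((I-A)⁻¹)_{ij} = (-1)^{i+j} (det (I-A))⁻¹ · det ((I-A)^{ji})`,
where `(I-A)^{ji}` is `I - A` with row `j` and column `i` removed. -/
theorem right_quantum_inverse_entries {R : Type*} [Ring R] (m : ℕ)
    (a : Matrix (Fin (m + 1)) (Fin (m + 1)) R)
    (hrq1 : ∀ i j k : Fin (m + 1), i ≠ j → a j k * a i k = a i k * a j k)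
    (hrq2 : ∀ i j k l : Fin (m + 1), i ≠ j → k ≠ l →
      a i k * a j l - a j k * a i l = a j l * a i k - a i l * a j k)
    (X : Matrix (Fin (m + 1)) (Fin (m + 1)) R)
    (hX1 : (1 - a) * X = 1) (hX2 : X * (1 - a) = 1)
    (d : R) (hd1 : d * ncdet (1 - a) = 1) (hd2 : ncdet (1 - a) * d = 1) :
    ∀ i j : Fin (m + 1),
      X i j = ((-1 : ℤ) ^ ((i : ℕ) + (j : ℕ))) •
        (d * ncdet ((1 - a).submatrix j.succAbove i.succAbove)) := by
  intro i j
  set B : Matrix (Fin (m + 1)) (Fin (m + 1)) R := 1 - a with hBdef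
  have hrq : IsRQ B := one_sub_isRQ a hrq1 hrq2
  set W : Matrix (Fin (m + 1)) (Fin (m + 1)) R := Matrix.of fun i k =>
    ((-1 : ℤ) ^ ((i : ℕ) + (k : ℕ))) • (d * ncdet (B.submatrix k.succAbove i.succAbove))
    with hW
  have hW1 : W * B = 1 := by
    ext i' j'
    rw [Matrix.mul_apply]
    have hterm : ∀ k, W i' k * B k j' =
        d * (((-1 : ℤ) ^ ((i' : ℕ) + (k : ℕ))) •
          (ncdet (B.submatrix k.succAbove i'.succAbove) * B k j')) := by
      intro k
      rw [hW]
      show (((-1 : ℤ) ^ ((i' : ℕ) + (k : ℕ))) •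
          (d * ncdet (B.submatrix k.succAbove i'.succAbove))) * B k j' = _
      rw [smul_mul_assoc, mul_assoc, mul_smul_comm]
    simp only [hterm]
    rw [← Finset.mul_sum, ncdet_cofactor hrq i' j']
    by_cases h : i' = j'
    · subst h
      rw [if_pos rfl, hd1, Matrix.one_apply_eq]
    · rw [if_neg h, mul_zero, Matrix.one_apply_ne h]
  have hWX : W = X := by
    calc W = W * 1 := (Matrix.mul_one W).symm
    _ = W * (B * X) := by rw [hX1]
    _ = (W * B) * X := by rw [Matrix.mul_assoc]
    _ = 1 * X := by rw [hW1]
    _ = X := Matrix.one_mul X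
  rw [← hWX]
  rfl
end

section
/- Let 𝐪 = (q_{ij})_{i<j} be nonzero complex numbers (extended by q_{ii}=1, q_{ji}=q_{ij}^{-1}) and let I_{𝐪-cf} be the ideal of the free algebra generated by the 𝐪-Cartier-Foata relations q_{kl}a_{jl}a_{ik} = q_{ij}a_{ik}a_{jl} (i ≠ j). For words λ = λ₁ i j λ₂ and μ = μ₁ k l μ₂ with i < j, let λ' = λ₁ j i λ₂ and μ' = μ₁ l k μ₂ (transposing the two adjacent letters in the same positions). Then w(λ,μ)·a_{λ,μ} ≡ w(λ',μ')·a_{λ',μ'} modulo I_{𝐪-cf}, where w(λ,μ) = ∏_{(r,s)∈Inv(μ)} q_{μ_s μ_r} · ∏_{(r,s)∈Inv(λ)} q_{λ_s λ_r}^{-1} and a_{λ,μ} = a_{λ₁μ₁}⋯a_{λ_ℓμ_ℓ}. -/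
/-- `∏_{(r,s) ∈ Inv(ν)} f ν_s ν_r`, the product of `f` over the inversions of the word
`ν` (pairs of positions `r < s` with `ν_r > ν_s`). -/
noncomputable def invProd {m : ℕ} (f : Fin m → Fin m → ℂ) (ν : List (Fin m)) : ℂ :=
  ∏ p ∈ Finset.univ.filter
      (fun p : Fin ν.length × Fin ν.length => p.1 < p.2 ∧ ν.get p.2 < ν.get p.1),
    f (ν.get p.2) (ν.get p.1)

/-- The weight `w(λ, μ) = ∏_{(r,s)∈Inv(μ)} q_{μ_s μ_r} · ∏_{(r,s)∈Inv(λ)} q_{λ_s λ_r}⁻¹`. -/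
noncomputable def qWeight {m : ℕ} (Q : Fin m → Fin m → ℂ) (lam mu : List (Fin m)) : ℂ :=
  invProd Q mu * invProd (fun x y => (Q x y)⁻¹) lam

/-- The word `a_{λ,μ} = a_{λ₁μ₁} a_{λ₂μ₂} ⋯`. -/
def wordProd {m : ℕ} {R : Type*} [Ring R] (b : Fin m → Fin m → R)
    (lam mu : List (Fin m)) : R :=
  (List.zipWith b lam mu).prod

/-- auxiliary: `f b a` if `b < a`, else `1`. -/
noncomputable def gf {m : ℕ} (f : Fin m → Fin m → ℂ) (a b : Fin m) : ℂ :=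
  if b < a then f b a else 1

/-- auxiliary: inversion product for a word given as a function `Fin n → Fin m`,
written as a full product of `gf`-factors over all ordered pairs. -/
noncomputable def invProdF {m n : ℕ} (f : Fin m → Fin m → ℂ) (ν : Fin n → Fin m) : ℂ :=
  ∏ p : Fin n × Fin n, if p.1 < p.2 then gf f (ν p.1) (ν p.2) else 1

lemma invProd_eq_F {m : ℕ} (f : Fin m → Fin m → ℂ) (ν : List (Fin m)) {n : ℕ}
    (h : ν.length = n) :
    invProd f ν = invProdF f (fun p : Fin n => ν.get (Fin.cast h.symm p)) := by
  subst h
  rw [invProd, invProdF, Finset.prod_filter]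
  apply Finset.prod_congr rfl
  intro p _
  simp only [Fin.cast_refl, id, gf]
  by_cases h1 : p.1 < p.2 <;> by_cases h2 : ν.get p.2 < ν.get p.1 <;>
    simp [h1, h2]

lemma swap_lt_iff {n : ℕ} (u v a b : Fin n) (huv : (u : ℕ) + 1 = v)
    (h1 : ¬(a = u ∧ b = v)) (h2 : ¬(a = v ∧ b = u)) :
    Equiv.swap u v a < Equiv.swap u v b ↔ a < b := by
  simp only [Equiv.swap_apply_def, Fin.lt_def, ← Fin.val_eq_val] at *
  split_ifs <;> omega

lemma invProdF_comp_swap {m n : ℕ} (f : Fin m → Fin m → ℂ) (ν : Fin n → Fin m)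
    (u v : Fin n) (huv : (u : ℕ) + 1 = v) :
    invProdF f (ν ∘ Equiv.swap u v) * gf f (ν u) (ν v)
      = invProdF f ν * gf f (ν v) (ν u) := by
  have huv' : u < v := by rw [Fin.lt_def]; omega
  have hne : u ≠ v := huv'.ne
  set τ := Equiv.swap u v with hτ
  have hτu : τ u = v := Equiv.swap_apply_left u v
  have hτv : τ v = u := Equiv.swap_apply_right u v
  have hre : invProdF f ν
      = ∏ p : Fin n × Fin n, (if τ p.1 < τ p.2 then gf f (ν (τ p.1)) (ν (τ p.2)) else 1) := by
    rw [invProdF]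
    exact (Equiv.prod_comp (τ.prodCongr τ)
      (fun p : Fin n × Fin n => if p.1 < p.2 then gf f (ν p.1) (ν p.2) else 1)).symm
  rw [hre, invProdF]
  set F1 : Fin n × Fin n → ℂ :=
    fun p => if p.1 < p.2 then gf f ((ν ∘ τ) p.1) ((ν ∘ τ) p.2) else 1 with hF1
  set F2 : Fin n × Fin n → ℂ :=
    fun p => if τ p.1 < τ p.2 then gf f (ν (τ p.1)) (ν (τ p.2)) else 1 with hF2
  have hp12 : ((u, v) : Fin n × Fin n) ≠ (v, u) := by
    intro h; exact hne (congrArg Prod.fst h)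
  have hmem1 : ((u, v) : Fin n × Fin n) ∈ Finset.univ := Finset.mem_univ _
  have hmem2 : ((v, u) : Fin n × Fin n) ∈ (Finset.univ.erase (u, v)) := by
    simp [Finset.mem_erase, hp12.symm, Ne, Prod.ext_iff, hne.symm]
  have expand : ∀ F : Fin n × Fin n → ℂ,
      ∏ p : Fin n × Fin n, F p
        = F (u, v) * (F (v, u) * ∏ p ∈ (Finset.univ.erase (u, v)).erase (v, u), F p) := by
    intro F
    rw [Finset.mul_prod_erase _ F hmem2, Finset.mul_prod_erase _ F hmem1]
  have hsame : ∀ p ∈ (Finset.univ.erase (u, v)).erase (v, u), F1 p = F2 p := by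
    intro p hp
    simp only [Finset.mem_erase] at hp
    have h1 : ¬(p.1 = u ∧ p.2 = v) := by
      rintro ⟨a, b⟩; exact hp.2.1 (Prod.ext a b)
    have h2 : ¬(p.1 = v ∧ p.2 = u) := by
      rintro ⟨a, b⟩; exact hp.1 (Prod.ext a b)
    have := swap_lt_iff u v p.1 p.2 huv h1 h2
    rw [← hτ] at this
    simp only [hF1, hF2, Function.comp, this]
  have hv1 : F1 (u, v) = gf f (ν v) (ν u) := by
    simp [hF1, huv', hτu, hτv]
  have hv2 : F1 (v, u) = 1 := by
    simp [hF1, not_lt.2 huv'.le]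
  have hw1 : F2 (u, v) = 1 := by
    simp [hF2, hτu, hτv, not_lt.2 huv'.le]
  have hw2 : F2 (v, u) = gf f (ν u) (ν v) := by
    simp [hF2, hτu, hτv, huv']
  rw [expand F1, expand F2, hv1, hv2, hw1, hw2,
    Finset.prod_congr rfl hsame]
  ring

lemma invProd_swap {m : ℕ} (f : Fin m → Fin m → ℂ) (ν₁ ν₂ : List (Fin m)) (x y : Fin m) :
    invProd f (ν₁ ++ y :: x :: ν₂) * gf f x y
      = invProd f (ν₁ ++ x :: y :: ν₂) * gf f y x := by
  set n := (ν₁ ++ x :: y :: ν₂).length with hn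
  have hnval : n = ν₁.length + (ν₂.length + 2) := by simp [hn]
  have hlen : (ν₁ ++ y :: x :: ν₂).length = n := by simp [hnval]
  have hu : ν₁.length < n := by omega
  have hv : ν₁.length + 1 < n := by omega
  set u : Fin n := ⟨ν₁.length, hu⟩ with hu'
  set v : Fin n := ⟨ν₁.length + 1, hv⟩ with hv'
  have huv : (u : ℕ) + 1 = v := rfl
  have hx : (ν₁ ++ x :: y :: ν₂).get u = x := by
    simp [List.getElem_append, u]
  have hy : (ν₁ ++ x :: y :: ν₂).get v = y := by
    simp [List.getElem_append, v]
  have hfun : (fun p : Fin n => (ν₁ ++ y :: x :: ν₂).get (Fin.cast hlen.symm p))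
      = ((ν₁ ++ x :: y :: ν₂).get ∘ Equiv.swap u v) := by
    funext p
    have hswap : ((Equiv.swap u v p : Fin n) : ℕ)
        = if (p : ℕ) = ν₁.length then ν₁.length + 1
          else if (p : ℕ) = ν₁.length + 1 then ν₁.length else p := by
      simp only [Equiv.swap_apply_def, hu', hv', ← Fin.val_eq_val]
      split_ifs <;> rfl
    simp only [Function.comp, List.get_eq_getElem, Fin.coe_cast]
    rw [List.getElem_append, List.getElem_append]
    simp only [hswap, List.getElem_cons]
    split_ifs <;> first | rfl | omega | (congr 1 <;> omega)
  have h1 := invProd_eq_F f (ν₁ ++ y :: x :: ν₂) hlen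
  have h2 := invProd_eq_F f (ν₁ ++ x :: y :: ν₂) (rfl : _ = n)
  rw [h1, hfun, h2]
  have h3 : (fun p : Fin n => (ν₁ ++ x :: y :: ν₂).get (Fin.cast rfl p))
      = (ν₁ ++ x :: y :: ν₂).get := by funext p; rfl
  rw [h3]
  have := invProdF_comp_swap f ((ν₁ ++ x :: y :: ν₂).get) u v huv
  rw [hx, hy] at this
  exact this

/-- Modulo the `𝐪`-Cartier–Foata ideal `I_{𝐪-cf}` (generated by
`q_{kl} a_{jl} a_{ik} - q_{ij} a_{ik} a_{jl}` for `i ≠ j`), the weighted word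
`w(λ,μ) a_{λ,μ}` is invariant under transposing a pair of adjacent letters with distinct
row indices `i < j` in `λ` together with the letters in the same positions of `μ`
(all three cases `k < l`, `k > l`, `k = l` are covered).  Working modulo the ideal is
expressed by quantifying over all `ℂ`-algebras `R` and all interpretations `b` of the
variables satisfying the `𝐪`-Cartier–Foata relations. -/
theorem q_cartier_foata_weight_swap (m : ℕ)
    (Q : Fin m → Fin m → ℂ) (hQ0 : ∀ i j, Q i j ≠ 0)
    (hQ1 : ∀ i, Q i i = 1) (hQ2 : ∀ i j, Q j i = (Q i j)⁻¹)
    (lam₁ lam₂ mu₁ mu₂ : List (Fin m)) (i j k l : Fin m) (hij : i < j)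
    (hlen₁ : lam₁.length = mu₁.length) (hlen₂ : lam₂.length = mu₂.length) :
    ∀ (R : Type) [Ring R] [Algebra ℂ R] (b : Fin m → Fin m → R),
      (∀ i' j' k' l' : Fin m, i' ≠ j' →
        (Q k' l') • (b j' l' * b i' k') = (Q i' j') • (b i' k' * b j' l')) →
      qWeight Q (lam₁ ++ i :: j :: lam₂) (mu₁ ++ k :: l :: mu₂) •
          wordProd b (lam₁ ++ i :: j :: lam₂) (mu₁ ++ k :: l :: mu₂) =
        qWeight Q (lam₁ ++ j :: i :: lam₂) (mu₁ ++ l :: k :: mu₂) •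
          wordProd b (lam₁ ++ j :: i :: lam₂) (mu₁ ++ l :: k :: mu₂) := by
  intro R _ _ b hb
  have hne : i ≠ j := hij.ne
  set fQ : Fin m → Fin m → ℂ := fun x y => (Q x y)⁻¹ with hfQ
  -- weight for lambda
  have hlam := invProd_swap fQ lam₁ lam₂ i j
  have hgij : gf fQ i j = 1 := by rw [gf, if_neg (asymm hij)]
  have hgji : gf fQ j i = (Q i j)⁻¹ := by rw [gf, if_pos hij]
  rw [hgij, hgji, mul_one] at hlam
  -- hlam : invProd fQ (lam₁ ++ j :: i :: lam₂) = invProd fQ (lam₁ ++ i :: j :: lam₂) * (Q i j)⁻¹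
  have hmu := invProd_swap Q mu₁ mu₂ k l
  have hmu' : invProd Q (mu₁ ++ l :: k :: mu₂) = invProd Q (mu₁ ++ k :: l :: mu₂) * Q k l := by
    rcases lt_trichotomy k l with h | h | h
    · rw [gf, if_neg (asymm h), gf, if_pos h, mul_one] at hmu
      exact hmu
    · subst h
      rw [gf, if_neg (lt_irrefl k), mul_one] at hmu
      rw [hQ1 k, mul_one]
    · rw [gf, if_pos h, gf, if_neg (asymm h), mul_one] at hmu
      have := (eq_div_iff (hQ0 l k)).2 hmu
      rw [this, div_eq_mul_inv, ← hQ2]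
  -- total weight relation
  have hwq : qWeight Q (lam₁ ++ j :: i :: lam₂) (mu₁ ++ l :: k :: mu₂)
      = qWeight Q (lam₁ ++ i :: j :: lam₂) (mu₁ ++ k :: l :: mu₂) * Q k l * (Q i j)⁻¹ := by
    rw [qWeight, qWeight, hmu', hlam]; ring
  -- expand the word products
  have hz1 : wordProd b (lam₁ ++ i :: j :: lam₂) (mu₁ ++ k :: l :: mu₂)
      = (List.zipWith b lam₁ mu₁).prod *
          (b i k * (b j l * (List.zipWith b lam₂ mu₂).prod)) := by
    rw [wordProd, List.zipWith_append hlen₁]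
    simp [List.prod_append, List.prod_cons, mul_assoc]
  have hz2 : wordProd b (lam₁ ++ j :: i :: lam₂) (mu₁ ++ l :: k :: mu₂)
      = (List.zipWith b lam₁ mu₁).prod *
          (b j l * (b i k * (List.zipWith b lam₂ mu₂).prod)) := by
    rw [wordProd, List.zipWith_append hlen₁]
    simp [List.prod_append, List.prod_cons, mul_assoc]
  set A := (List.zipWith b lam₁ mu₁).prod with hA
  set B := (List.zipWith b lam₂ mu₂).prod with hB
  set w := qWeight Q (lam₁ ++ i :: j :: lam₂) (mu₁ ++ k :: l :: mu₂) with hw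
  rw [hz1, hz2, hwq]
  set X := A * (b i k * (b j l * B)) with hX
  set Y := A * (b j l * (b i k * B)) with hY
  -- the key relation
  have gen : ∀ (c : ℂ) (P Z r : R), c • (P * (r * Z)) = P * ((c • r) * Z) := by
    intro c P Z r
    rw [← mul_smul_comm, ← smul_mul_assoc]
  have key : Q k l • Y = Q i j • X := by
    have e1 : Y = A * ((b j l * b i k) * B) := by rw [hY, mul_assoc]
    have e2 : X = A * ((b i k * b j l) * B) := by rw [hX, mul_assoc]
    rw [e1, e2, gen (Q k l) A B (b j l * b i k), gen (Q i j) A B (b i k * b j l),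
      hb i j k l hne]
  have hrc : w * Q k l * (Q i j)⁻¹ = w * (Q i j)⁻¹ * Q k l := by ring
  calc w • X = (w * (Q i j)⁻¹ * Q i j) • X := by
        rw [mul_assoc, inv_mul_cancel₀ (hQ0 i j), mul_one]
    _ = (w * (Q i j)⁻¹) • (Q i j • X) := by rw [← smul_smul]
    _ = (w * (Q i j)⁻¹) • (Q k l • Y) := by rw [key]
    _ = (w * Q k l * (Q i j)⁻¹) • Y := by rw [smul_smul, hrc]
end

section
/- Let I_{q-rtq} be the ideal of the free algebra on a_{ij} generated by the q-right-quantum relations a_{jk}a_{ik} - q a_{ik}a_{jk} (i<j) and a_{ik}a_{jl} - q^{-1}a_{jk}a_{il} - a_{jl}a_{ik} + q a_{il}a_{jk} (i<j, k<l). For words λ = λ₁ i j λ₂, μ = μ₁ k l μ₂ with i < j, and λ' = λ₁ j i λ₂, μ' = μ₁ l k μ₂, one has q^{inv μ - inv λ} a_{λ,μ} + q^{inv μ' - inv λ} a_{λ,μ'} ≡ q^{inv μ - inv λ'} a_{λ',μ} + q^{inv μ' - inv λ'} a_{λ',μ'} modulo I_{q-rtq}. -/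
/-- The number of inversions of a word: pairs of positions `r < s` with `ν_r > ν_s`. -/
def invCount {m : ℕ} (ν : List (Fin m)) : ℕ :=
  (Finset.univ.filter
    (fun p : Fin ν.length × Fin ν.length => p.1 < p.2 ∧ ν.get p.2 < ν.get p.1)).card

lemma countP_eq_sum {m : ℕ} (a : Fin m) (t : List (Fin m)) :
    (∑ r : Fin t.length, if t.get r < a then 1 else 0) = t.countP (fun b => decide (b < a)) := by
  induction t with
  | nil => simp
  | cons c t ih =>
    rw [List.countP_cons]
    simp only [List.length_cons, Fin.sum_univ_succ, List.get, List.get_cons_succ']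
    rw [ih]
    by_cases h : c < a <;> simp [h] <;> omega

lemma invCount_cons {m : ℕ} (a : Fin m) (t : List (Fin m)) :
    invCount (a :: t) = t.countP (fun b => decide (b < a)) + invCount t := by
  classical
  have key : ∀ (ν : List (Fin m)), invCount ν =
      ∑ p1 : Fin ν.length, ∑ p2 : Fin ν.length,
        if p1 < p2 ∧ ν.get p2 < ν.get p1 then 1 else 0 := by
    intro ν
    rw [invCount, Finset.card_filter, ← Fintype.sum_prod_type']
  rw [key (a :: t), key t]
  simp only [List.length_cons, Fin.sum_univ_succ]
  rw [← countP_eq_sum a t]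
  simp [Fin.succ_lt_succ_iff, List.get]

lemma invCount_swap {m : ℕ} (x y : Fin m) (c₁ c₂ : List (Fin m)) :
    invCount (c₁ ++ y :: x :: c₂) + (if y < x then 1 else 0)
      = invCount (c₁ ++ x :: y :: c₂) + (if x < y then 1 else 0) := by
  induction c₁ with
  | nil =>
    simp only [List.nil_append, invCount_cons, List.countP_cons]
    rcases lt_trichotomy x y with h | h | h
    · simp [h, not_lt_of_gt h]; omega
    · simp [h]
    · simp [h, not_lt_of_gt h]; omega
  | cons a c₁ ih =>
    rw [List.cons_append, List.cons_append, invCount_cons, invCount_cons]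
    have hperm : (c₁ ++ y :: x :: c₂).Perm (c₁ ++ x :: y :: c₂) :=
      List.Perm.append_left _ (List.Perm.swap _ _ _)
    rw [hperm.countP_eq]
    omega

lemma wordProd_split {m : ℕ} {R : Type*} [Ring R] (b : Fin m → Fin m → R)
    (c₁ c₂ d₁ d₂ : List (Fin m)) (x y u v : Fin m) (h₁ : c₁.length = d₁.length) :
    wordProd b (c₁ ++ x :: y :: c₂) (d₁ ++ u :: v :: d₂)
      = wordProd b c₁ d₁ * (b x u * b y v) * wordProd b c₂ d₂ := by
  unfold wordProd
  rw [List.zipWith_append h₁]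
  simp [List.prod_append, mul_assoc]

lemma mid1 {R : Type} [Ring R] [Algebra ℂ R] (q : ℂ) (hq : q ≠ 0) (n : ℤ) (X X' Y Y' : R)
    (h : X - q⁻¹ • Y = Y' - q • X') :
    q ^ n • X + q ^ (n + 1) • X' = q ^ (n - 1) • Y + q ^ n • Y' := by
  have hX : X = Y' - q • X' + q⁻¹ • Y := by rw [sub_eq_iff_eq_add] at h; exact h
  rw [hX, zpow_add_one₀ hq, zpow_sub_one₀ hq]
  match_scalars <;> field_simp <;> simp

lemma mid2 {R : Type} [Ring R] [Algebra ℂ R] (q : ℂ) (hq : q ≠ 0) (n : ℤ) (X Y : R)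
    (h : Y = q • X) :
    q ^ n • X + q ^ n • X = q ^ (n - 1) • Y + q ^ (n - 1) • Y := by
  rw [h, zpow_sub_one₀ hq]
  match_scalars <;> field_simp

lemma mid3 {R : Type} [Ring R] [Algebra ℂ R] (q : ℂ) (hq : q ≠ 0) (n : ℤ) (X X' Y Y' : R)
    (h : X' - q⁻¹ • Y' = Y - q • X) :
    q ^ n • X + q ^ (n - 1) • X' = q ^ (n - 1) • Y + q ^ (n - 2) • Y' := by
  have hX' : X' = Y - q • X + q⁻¹ • Y' := by rw [sub_eq_iff_eq_add] at h; exact h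
  rw [hX', show n - 2 = n - 1 - 1 by ring, zpow_sub_one₀ hq, zpow_sub_one₀ (a := q) hq,
    show n = (n - 1) + 1 by ring, zpow_add_one₀ hq]
  match_scalars <;> field_simp <;> simp

/-- Modulo the `q`-right-quantum ideal `I_{q-rtq}` (generated by
`a_{jk}a_{ik} - q a_{ik}a_{jk}` for `i < j` and
`a_{ik}a_{jl} - q⁻¹ a_{jk}a_{il} - a_{jl}a_{ik} + q a_{il}a_{jk}` for `i < j`, `k < l`),
for words `λ = λ₁ i j λ₂`, `μ = μ₁ k l μ₂` with `i < j`, and `λ' = λ₁ j i λ₂`,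
`μ' = μ₁ l k μ₂`, one has
`q^{inv μ - inv λ} a_{λ,μ} + q^{inv μ' - inv λ} a_{λ,μ'}
  = q^{inv μ - inv λ'} a_{λ',μ} + q^{inv μ' - inv λ'} a_{λ',μ'}`.
Working modulo the ideal is expressed by quantifying over all `ℂ`-algebras `R` and
interpretations `b` of the variables satisfying the `q`-right-quantum relations. -/
theorem q_right_quantum_weight_swap (m : ℕ) (q : ℂ) (hq : q ≠ 0)
    (lam₁ lam₂ mu₁ mu₂ : List (Fin m)) (i j k l : Fin m) (hij : i < j)
    (hlen₁ : lam₁.length = mu₁.length) (hlen₂ : lam₂.length = mu₂.length) :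
    ∀ (R : Type) [Ring R] [Algebra ℂ R] (b : Fin m → Fin m → R),
      (∀ i' j' k' : Fin m, i' < j' → b j' k' * b i' k' = q • (b i' k' * b j' k')) →
      (∀ i' j' k' l' : Fin m, i' < j' → k' < l' →
        b i' k' * b j' l' - q⁻¹ • (b j' k' * b i' l') =
          b j' l' * b i' k' - q • (b i' l' * b j' k')) →
      (let lam := lam₁ ++ i :: j :: lam₂
       let lam' := lam₁ ++ j :: i :: lam₂
       let mu := mu₁ ++ k :: l :: mu₂
       let mu' := mu₁ ++ l :: k :: mu₂
       (q ^ ((invCount mu : ℤ) - (invCount lam : ℤ))) • wordProd b lam mu +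
           (q ^ ((invCount mu' : ℤ) - (invCount lam : ℤ))) • wordProd b lam mu' =
         (q ^ ((invCount mu : ℤ) - (invCount lam' : ℤ))) • wordProd b lam' mu +
           (q ^ ((invCount mu' : ℤ) - (invCount lam' : ℤ))) • wordProd b lam' mu') := by
  intro R _ _ b rel1 rel2
  have hswapl := invCount_swap i j lam₁ lam₂
  rw [if_pos hij, if_neg (not_lt_of_gt hij)] at hswapl
  have hswapm := invCount_swap k l mu₁ mu₂
  dsimp only
  rw [wordProd_split b lam₁ lam₂ mu₁ mu₂ i j k l hlen₁,
      wordProd_split b lam₁ lam₂ mu₁ mu₂ i j l k hlen₁,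
      wordProd_split b lam₁ lam₂ mu₁ mu₂ j i k l hlen₁,
      wordProd_split b lam₁ lam₂ mu₁ mu₂ j i l k hlen₁]
  set P := wordProd b lam₁ mu₁
  set S := wordProd b lam₂ mu₂
  have factor : ∀ (c d : ℂ) (M N : R),
      c • (P * M * S) + d • (P * N * S) = P * (c • M + d • N) * S := by
    intro c d M N
    rw [mul_add, add_mul, mul_smul_comm, mul_smul_comm, smul_mul_assoc, smul_mul_assoc]
  rw [factor, factor]
  congr 2
  rcases lt_trichotomy k l with hkl | hkl | hkl
  · rw [if_pos hkl, if_neg (not_lt_of_gt hkl)] at hswapm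
    have e1 : (invCount (mu₁ ++ l :: k :: mu₂) : ℤ) - (invCount (lam₁ ++ i :: j :: lam₂) : ℤ)
        = ((invCount (mu₁ ++ k :: l :: mu₂) : ℤ) - (invCount (lam₁ ++ i :: j :: lam₂) : ℤ)) + 1 := by
      omega
    have e2 : (invCount (mu₁ ++ k :: l :: mu₂) : ℤ) - (invCount (lam₁ ++ j :: i :: lam₂) : ℤ)
        = ((invCount (mu₁ ++ k :: l :: mu₂) : ℤ) - (invCount (lam₁ ++ i :: j :: lam₂) : ℤ)) - 1 := by
      omega
    have e3 : (invCount (mu₁ ++ l :: k :: mu₂) : ℤ) - (invCount (lam₁ ++ j :: i :: lam₂) : ℤ)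
        = (invCount (mu₁ ++ k :: l :: mu₂) : ℤ) - (invCount (lam₁ ++ i :: j :: lam₂) : ℤ) := by
      omega
    rw [e1, e2, e3]
    exact mid1 q hq _ _ _ _ _ (rel2 i j k l hij hkl)
  · subst hkl
    have e2 : (invCount (mu₁ ++ k :: k :: mu₂) : ℤ) - (invCount (lam₁ ++ j :: i :: lam₂) : ℤ)
        = ((invCount (mu₁ ++ k :: k :: mu₂) : ℤ) - (invCount (lam₁ ++ i :: j :: lam₂) : ℤ)) - 1 := by
      omega
    rw [e2]
    exact mid2 q hq _ _ _ (rel1 i j k hij)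
  · rw [if_pos hkl, if_neg (not_lt_of_gt hkl)] at hswapm
    have e1 : (invCount (mu₁ ++ l :: k :: mu₂) : ℤ) - (invCount (lam₁ ++ i :: j :: lam₂) : ℤ)
        = ((invCount (mu₁ ++ k :: l :: mu₂) : ℤ) - (invCount (lam₁ ++ i :: j :: lam₂) : ℤ)) - 1 := by
      omega
    have e2 : (invCount (mu₁ ++ k :: l :: mu₂) : ℤ) - (invCount (lam₁ ++ j :: i :: lam₂) : ℤ)
        = ((invCount (mu₁ ++ k :: l :: mu₂) : ℤ) - (invCount (lam₁ ++ i :: j :: lam₂) : ℤ)) - 1 := by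
      omega
    have e3 : (invCount (mu₁ ++ l :: k :: mu₂) : ℤ) - (invCount (lam₁ ++ j :: i :: lam₂) : ℤ)
        = ((invCount (mu₁ ++ k :: l :: mu₂) : ℤ) - (invCount (lam₁ ++ i :: j :: lam₂) : ℤ)) - 2 := by
      omega
    rw [e1, e2, e3]
    exact mid3 q hq _ _ _ _ _ (rel2 i j l k hij hkl)
end

section
/- In the free monoid on steps a_{ij} (1 ≤ i,j ≤ m), every balanced sequence whose disjoint cycle decomposition is u₁u₂⋯u_k, placed into β ∈ ℕ slots so that the product over slots reproduces the sequence modulo the Cartier-Foata relations and each slot is a term of (det(I-C))^{-1} (i.e. a concatenation of paths from n+1 to n+1, then n+2 to n+2, etc., in heights > n with excursions below), must place all steps of any single cycle u_i into the same slot. -/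
open scoped Classical

/-- Lattice steps: a step `(i, j)` goes from height `i` to height `j` (0-indexed). -/
abbrev Step (m : ℕ) := Fin m × Fin m

/-- The Cartier–Foata congruence on sequences of steps: generated by transposing two
adjacent steps with distinct starting heights (`a_{ik} a_{jl} = a_{jl} a_{ik}` for
`i ≠ j`). -/
def CFeq {m : ℕ} : List (Step m) → List (Step m) → Prop :=
  Relation.EqvGen (fun w₁ w₂ => ∃ u v x y, Prod.fst x ≠ Prod.fst y ∧
    w₁ = u ++ x :: y :: v ∧ w₂ = u ++ y :: x :: v)

/-- A disjoint cycle: a nonempty lattice path from some height back to itself in which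
each height occurs at most once as a starting height. -/
def IsDisjointCycle {m : ℕ} (P : List (Step m)) : Prop :=
  P ≠ [] ∧ P.Chain' (fun s t => s.2 = t.1) ∧
    (∀ x ∈ P.head?, ∀ y ∈ P.getLast?, y.2 = x.1) ∧
    (P.map Prod.fst).Nodup

/-- A term of `(det (I - C))⁻¹`, i.e. a word which is the concatenation of a lattice path
from `n+1` to `n+1`, then a path from `n+2` to `n+2` avoiding height `n+1`, …, and
finally a path from `m` to `m` avoiding heights `n+1, …, m-1` (0-indexed: the `t`-th path
goes from height `n+t` to itself using only heights `< n` or `≥ n+t`). -/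
def ValidTerm (m n : ℕ) (w : List (Step m)) : Prop :=
  ∃ P : Fin (m - n) → List (Step m),
    w = (List.ofFn P).flatten ∧
    ∀ t : Fin (m - n),
      (P t).Chain' (fun s u => s.2 = u.1) ∧
      (∀ x ∈ (P t).head?, (x.1 : ℕ) = n + (t : ℕ)) ∧
      (∀ x ∈ (P t).getLast?, (x.2 : ℕ) = n + (t : ℕ)) ∧
      (∀ s ∈ P t, ((s.1 : ℕ) < n ∨ n + (t : ℕ) ≤ (s.1 : ℕ)) ∧
        ((s.2 : ℕ) < n ∨ n + (t : ℕ) ≤ (s.2 : ℕ)))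

namespace CF10

variable {m n : ℕ} {β : Type*}

/-- Height constraints for a step inside a path of level `t`. -/
def Ok (n t : ℕ) (s : Step m) : Prop :=
  ((s.1 : ℕ) < n ∨ n + t ≤ (s.1 : ℕ)) ∧ ((s.2 : ℕ) < n ∨ n + t ≤ (s.2 : ℕ))

/-- `Walk m n t h w` : `w` is a valid continuation of a term of `(det (I-C))⁻¹`,
given that we are currently inside a path of level `t` at current height `h`. -/
inductive Walk (m n : ℕ) : ℕ → ℕ → List (Step m) → Prop
  | nil (t : ℕ) : Walk m n t (n + t) []
  | cont {t h : ℕ} {s : Step m} {w : List (Step m)} :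
      (s.1 : ℕ) = h → Ok n t s → Walk m n t (s.2 : ℕ) w → Walk m n t h (s :: w)
  | new {t t' h : ℕ} {s : Step m} {w : List (Step m)} :
      t < t' → h = n + t → (s.1 : ℕ) = n + t' → Ok n t' s → Walk m n t' (s.2 : ℕ) w →
      Walk m n t h (s :: w)

/-- Relaxed form of `ValidTerm`. -/
def VF (m n : ℕ) (w : List (Step m)) : Prop := ∃ t, Walk m n t (n + t) w

lemma walk_height {t h : ℕ} {w : List (Step m)} (hw : Walk m n t h w) (hh : n ≤ h) :
    n + t ≤ h := by
  cases hw with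
  | nil => omega
  | cont hs hok _ => rcases hok.1 with h3 | h3 <;> omega
  | new _ h1 _ _ _ => omega

lemma walk_le {t t' : ℕ} {w : List (Step m)} (htt : t ≤ t')
    (hw : Walk m n t' (n + t') w) : Walk m n t (n + t) w := by
  rcases eq_or_lt_of_le htt with rfl | hlt
  · exact hw
  cases hw with
  | nil => exact Walk.nil t
  | cont hs hok hw' => exact Walk.new hlt rfl hs hok hw'
  | new hlt2 _ hs hok hw' => exact Walk.new (by omega) rfl hs hok hw'

lemma vf_cons {s : Step m} {l : List (Step m)} (h : VF m n (s :: l)) :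
    ∃ t, (s.1 : ℕ) = n + t ∧ Ok n t s ∧ Walk m n t (s.2 : ℕ) l := by
  obtain ⟨t, hw⟩ := h
  cases hw with
  | cont hs hok hw' => exact ⟨t, hs, hok, hw'⟩
  | new _ _ hs hok hw' => exact ⟨_, hs, hok, hw'⟩

lemma walk_cons_chain {t h : ℕ} {s : Step m} {l : List (Step m)} (hs : (s.1 : ℕ) = h)
    (hw : Walk m n t h (s :: l)) : Walk m n t (s.2 : ℕ) l := by
  cases hw with
  | cont _ hok hw' => exact hw'
  | new hlt heq hs' _ _ => omega

lemma walk_head_start {t h : ℕ} {s : Step m} {l : List (Step m)} (hne : h ≠ n + t)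
    (hw : Walk m n t h (s :: l)) : (s.1 : ℕ) = h := by
  cases hw with
  | cont hs _ _ => exact hs
  | new _ heq _ _ _ => exact absurd heq hne

lemma walk_chain_append :
    ∀ (p : List (Step m)) (h : ℕ) (rest : List (Step m)) (t : ℕ),
      p.Chain' (fun s u => s.2 = u.1) → (∀ s ∈ p, Ok n t s) →
      (∀ s ∈ p.head?, (s.1 : ℕ) = h) →
      Walk m n t (((p.getLast?).map (fun x => (x.2 : ℕ))).getD h) rest →
      Walk m n t h (p ++ rest)
  | [], h, rest, t, _, _, _, hw => by simpa using hw
  | s :: p, h, rest, t, hchain, hok, hhead, hw => by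
    have hs : (s.1 : ℕ) = h := hhead s rfl
    apply Walk.cont hs (hok s (List.mem_cons_self))
    have hc := List.isChain_cons.mp hchain
    apply walk_chain_append p (s.2 : ℕ) rest t hc.2
      (fun x hx => hok x (List.mem_cons_of_mem _ hx))
      (fun x hx => by have := hc.1 x hx; exact congrArg Fin.val this.symm)
    cases p with
    | nil => simpa using hw
    | cons y p' => rwa [List.getLast?_cons_cons] at hw

lemma walk_strip_chain :
    ∀ (p : List (Step m)) (h : ℕ) (rest : List (Step m)) (t : ℕ),
      p.Chain' (fun s u => s.2 = u.1) →
      (∀ s ∈ p.head?, (s.1 : ℕ) = h) →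
      Walk m n t h (p ++ rest) →
      Walk m n t (((p.getLast?).map (fun x => (x.2 : ℕ))).getD h) rest
  | [], h, rest, t, _, _, hw => by simpa using hw
  | s :: p, h, rest, t, hchain, hhead, hw => by
    have hs : (s.1 : ℕ) = h := hhead s rfl
    have hw' : Walk m n t ((s.2 : ℕ)) (p ++ rest) := walk_cons_chain hs (by simpa using hw)
    have hc := List.isChain_cons.mp hchain
    have hrec := walk_strip_chain p (s.2 : ℕ) rest t hc.2
      (fun x hx => by have := hc.1 x hx; exact congrArg Fin.val this.symm) hw'
    cases p with
    | nil => simpa using hrec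
    | cons y p' => rwa [List.getLast?_cons_cons]

lemma walk_flatten : ∀ (Ps : List (List (Step m))) (t₀ : ℕ),
    (∀ (j : ℕ) (hj : j < Ps.length),
      (Ps[j]).Chain' (fun s u => s.2 = u.1) ∧
      (∀ x ∈ (Ps[j]).head?, (x.1 : ℕ) = n + (t₀ + j)) ∧
      (∀ x ∈ (Ps[j]).getLast?, (x.2 : ℕ) = n + (t₀ + j)) ∧
      (∀ s ∈ Ps[j], Ok n (t₀ + j) s)) →
    Walk m n t₀ (n + t₀) Ps.flatten
  | [], t₀, _ => Walk.nil t₀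
  | p :: Ps, t₀, hP => by
    have h0 := hP 0 (by simp)
    simp only [List.getElem_cons_zero, Nat.add_zero] at h0
    have hrest : Walk m n (t₀ + 1) (n + (t₀ + 1)) Ps.flatten := by
      apply walk_flatten Ps (t₀ + 1)
      intro j hj
      have := hP (j + 1) (by simpa using Nat.succ_lt_succ hj)
      simpa [Nat.add_assoc, Nat.add_comm 1 j] using this
    have hrest' : Walk m n t₀ (n + t₀) Ps.flatten := walk_le (Nat.le_succ t₀) hrest
    rw [List.flatten_cons]
    apply walk_chain_append p (n + t₀) _ t₀ h0.1 h0.2.2.2 h0.2.1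
    cases hp : p.getLast? with
    | none => simpa using hrest'
    | some x =>
      have hx := h0.2.2.1 x (by rw [hp]; rfl)
      simpa [hx] using hrest'

lemma vf_of_validTerm {w : List (Step m)} (h : ValidTerm m n w) : VF m n w := by
  obtain ⟨P, hw, hP⟩ := h
  refine ⟨0, ?_⟩
  rw [hw]
  apply walk_flatten (List.ofFn P) 0
  intro j hj
  have hj' : j < m - n := by simpa using hj
  have h1 := hP ⟨j, hj'⟩
  have he : (List.ofFn P)[j] = P ⟨j, hj'⟩ := by
    simp [List.getElem_ofFn]
  rw [he]
  simpa [Ok, Nat.zero_add] using h1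

section SlotWords

variable [DecidableEq β]

/-- The word placed in slot `b`. -/
def W (b : β) (Z : List (Step m × β)) : List (Step m) :=
  (Z.filter (fun x => x.2 = b)).map Prod.fst

lemma W_append (b : β) (Z₁ Z₂ : List (Step m × β)) :
    W b (Z₁ ++ Z₂) = W b Z₁ ++ W b Z₂ := by simp [W]

lemma W_cons_eq (b : β) (x : Step m × β) (Z : List (Step m × β)) (h : x.2 = b) :
    W b (x :: Z) = x.1 :: W b Z := by simp [W, h]

lemma W_cons_ne (b : β) (x : Step m × β) (Z : List (Step m × β)) (h : ¬ x.2 = b) :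
    W b (x :: Z) = W b Z := by simp [W, h]

end SlotWords


section Chase

variable [DecidableEq β]

lemma getElem_idx {α : Type*} (l : List α) {i j : ℕ} (h : i = j) (hi : i < l.length) :
    l[i] = l[j]'(h ▸ hi) := by subst h; rfl

/-- The invariant carried along the first cycle in the chase. -/
inductive Inv (m n : ℕ) {β : Type*} [DecidableEq β] (u : List (Step m))
    (Z : List (Step m × β)) (b₀ : β) (T0 : ℕ) (i : ℕ) : Prop where
  | mk (b : β) (t J : ℕ)
    (hi0 : 1 ≤ i)
    (hiu : i ≤ u.length)
    (hizZ : i - 1 < Z.length)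
    (hiu1 : i - 1 < u.length)
    (hJu : J < u.length)
    (hJ : J < i)
    (hslot : (Z[i-1]'hizZ).2 = b)
    (hJt : ((u[J]'hJu).1 : ℕ) = n + t)
    (hwalk : Walk m n t (((u[i-1]'hiu1).2 : ℕ)) (W b (Z.drop i)))
    (hfresh : ∀ e, e ≠ b → W e (Z.take i) = [] ∨ W e (Z.drop i) = [] ∨
      ∃ (p : ℕ) (hp : p < u.length), p < i ∧ ∃ (s : Step m) (l : List (Step m)),
        W e (Z.drop i) = s :: l ∧ (s.1 : ℕ) = ((u[p]'hp).1 : ℕ))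
    (hbranch : (b = b₀ ∧ J = 0 ∧ ∀ (p : ℕ) (hp : p < Z.length), p < i → (Z[p]'hp).2 = b₀) ∨
      T0 < t)

lemma first_block_mono (u rest : List (Step m)) (Z : List (Step m × β))
    (hcyc : IsDisjointCycle u)
    (hZ : Z.map Prod.fst = u ++ rest)
    (hval : ∀ b, VF m n (W b Z)) (h0 : 0 < Z.length) :
    ∀ (i : ℕ) (hiz : i < Z.length), i < u.length → (Z[i]).2 = (Z[0]).2 := by
  obtain ⟨hne, hchain, hclose, hnodup⟩ := hcyc
  have hr : 0 < u.length := List.length_pos_iff.mpr hne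
  have hlen : Z.length = u.length + rest.length := by
    have := congrArg List.length hZ; simpa using this
  -- value of Z at positions < u.length
  have hZget : ∀ (i : ℕ) (hi : i < u.length) (hi2 : i < Z.length), (Z[i]'hi2).1 = u[i] := by
    intro i hi hi2
    have h1 : (Z.map Prod.fst)[i]'(by simpa using hi2) =
        (u ++ rest)[i]'(by rw [← hZ]; simpa using hi2) := by
      exact getElem_idx _ rfl _ |>.trans (by rw [List.getElem_of_eq hZ])
    rw [List.getElem_map] at h1
    rw [h1, List.getElem_append_left]
  -- chain within u
  have hchainN : ∀ (a c : ℕ), a + 1 = c → ∀ (hc : c < u.length) (ha : a < u.length),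
      ((u[a]'ha).2 : ℕ) = ((u[c]'hc).1 : ℕ) := by
    rintro a c rfl hc ha
    have := List.isChain_iff_getElem.mp hchain a (by omega)
    simpa using congrArg Fin.val this
  -- distinct starting heights
  have hnd : ∀ (a b : ℕ) (ha : a < u.length) (hb : b < u.length),
      ((u[a]'ha).1 : ℕ) = ((u[b]'hb).1 : ℕ) → a = b := by
    intro a b ha hb hab
    have h1 : (u.map Prod.fst)[a]'(by simpa) = (u.map Prod.fst)[b]'(by simpa) := by
      simpa using Fin.val_injective hab
    exact (List.Nodup.getElem_inj_iff hnodup).mp h1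
  -- closure
  have hcl : ∀ (h1 : u.length - 1 < u.length) (h2 : 0 < u.length),
      ((u[u.length-1]'h1).2 : ℕ) = ((u[0]'h2).1 : ℕ) := by
    intro h1 h2
    have hq := hclose (u.head hne) (List.head?_eq_head hne) (u.getLast hne)
      (List.getLast?_eq_getLast hne)
    have hq2 : u.getLast hne = u[u.length-1]'h1 := u.getLast_eq_getElem hne
    have hq3 : u.head hne = u[0]'h2 := u.head_eq_getElem hne
    rw [hq2, hq3] at hq
    exact congrArg Fin.val hq
  have h0u : (0 : ℕ) < Z.length := h0
  set b₀ := (Z[0]'h0).2 with hb₀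
  -- base : extract the walk for slot b₀
  have hZcons : Z = Z[0]'h0 :: Z.drop 1 := by
    simpa using List.drop_eq_getElem_cons h0
  have hW0 : W b₀ Z = (u[0]'hr) :: W b₀ (Z.drop 1) := by
    conv_lhs => rw [hZcons]
    rw [W_cons_eq _ _ _ rfl, hZget 0 hr h0]
  obtain ⟨T0, hT0, _, hw0⟩ := vf_cons (s := u[0]'hr) (by rw [← hW0]; exact hval b₀)
  have hInv : ∀ i : ℕ, 1 ≤ i → i ≤ u.length → Inv m n u Z b₀ T0 i := by
    intro i
    induction i with
    | zero => omega
    | succ i ih =>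
      intro _ hir
      rcases Nat.eq_zero_or_pos i with rfl | hi1
      · -- base case : Inv 1
        refine ⟨b₀, T0, 0, le_refl 1, hr, h0, hr, hr, by omega, rfl, hT0,
          by simpa using hw0, ?_, ?_⟩
        · intro e he
          left
          have ht1 : Z.take 1 = [Z[0]'h0] := by
            rw [show (1 : ℕ) = 0 + 1 from rfl, List.take_succ, List.getElem?_eq_getElem h0]
            simp
          rw [ht1, W_cons_ne _ _ _ (by simpa using fun h => he h.symm)]
          rfl
        · refine Or.inl ⟨rfl, rfl, ?_⟩
          intro p hp hp1
          have : p = 0 := by omega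
          subst this
          rfl
      · -- inductive step
        obtain ⟨b, t, J, hi0, hiu, hizZ, hiu1, hJu, hJ, hb, hJt, hw, hC, hbr⟩ :=
          ih hi1 (by omega)
        have hir' : i < u.length := by omega
        have hizi : i < Z.length := by omega
        have hchi : ((u[i-1]'hiu1).2 : ℕ) = ((u[i]'hir').1 : ℕ) :=
          hchainN (i-1) i (by omega) hir' hiu1
        have hdropi : Z.drop i = (Z[i]'hizi) :: Z.drop (i+1) := List.drop_eq_getElem_cons hizi
        by_cases hbb : (Z[i]'hizi).2 = b
        · -- same slot
          have hWd : W b (Z.drop i) = (u[i]'hir') :: W b (Z.drop (i+1)) := by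
            rw [hdropi, W_cons_eq _ _ _ hbb, hZget i hir' hizi]
          rw [hWd] at hw
          have hw' : Walk m n t ((u[i]'hir').2 : ℕ) (W b (Z.drop (i+1))) :=
            walk_cons_chain hchi.symm hw
          refine ⟨b, t, J, by omega, hir, hizi, hir', hJu, by omega, hbb, hJt, hw', ?_, ?_⟩
          · intro e he
            have htake : W e (Z.take (i+1)) = W e (Z.take i) := by
              rw [List.take_succ, List.getElem?_eq_getElem hizi]
              simp only [Option.toList_some]
              rw [W_append, W_cons_ne _ _ _ (by rw [hbb]; exact fun h => he h.symm)]
              simp [W]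
            have hdrop : W e (Z.drop i) = W e (Z.drop (i+1)) := by
              rw [hdropi, W_cons_ne _ _ _ (by rw [hbb]; exact fun h => he h.symm)]
            rcases hC e he with h | h | ⟨p, hp, hpi, s, l, hE, hs1⟩
            · left; rw [htake]; exact h
            · right; left; rw [← hdrop]; exact h
            · right; right; exact ⟨p, hp, by omega, s, l, by rw [← hdrop]; exact hE, hs1⟩
          · rcases hbr with ⟨h1, h2, h3⟩ | h1
            · refine Or.inl ⟨h1, h2, ?_⟩
              intro p hp hpi
              rcases Nat.lt_or_ge p i with hpi' | hpi'
              · exact h3 p hp hpi'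
              · have : p = i := by omega
                subst this
                rw [hbb, h1]
            · exact Or.inr h1
        · -- slot switch
          have hWdi' : W (Z[i]'hizi).2 (Z.drop i) =
              (u[i]'hir') :: W (Z[i]'hizi).2 (Z.drop (i+1)) := by
            rw [hdropi, W_cons_eq _ _ _ rfl, hZget i hir' hizi]
          have hfresh : W (Z[i]'hizi).2 (Z.take i) = [] := by
            rcases hC _ hbb with h | h | ⟨p, hp, hpi, s, l, hE, hs1⟩
            · exact h
            · rw [hWdi'] at h; exact absurd h (by simp)
            · rw [hWdi'] at hE
              have hs : s = u[i]'hir' := by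
                have := congrArg (fun l => l.head?) hE
                simpa using this.symm
              rw [hs] at hs1
              exact absurd (hnd i p hir' hp hs1) (by omega)
          have hWsplit : ∀ x : β, W x Z = W x (Z.take i) ++ W x (Z.drop i) := by
            intro x
            conv_lhs => rw [← List.take_append_drop i Z]
            rw [W_append]
          have hWb' : W (Z[i]'hizi).2 Z =
              (u[i]'hir') :: W (Z[i]'hizi).2 (Z.drop (i+1)) := by
            rw [hWsplit ((Z[i]'hizi).2), hfresh, List.nil_append, hWdi']
          obtain ⟨t2, ht2, hok2, hw2⟩ := vf_cons (s := u[i]'hir')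
            (by rw [← hWb']; exact hval _)
          have hgeT : T0 ≤ t := by
            rcases hbr with ⟨h1, h2, h3⟩ | h1
            · subst h2; omega
            · omega
          have hni : n ≤ ((u[i-1]'hiu1).2 : ℕ) := by rw [hchi, ht2]; omega
          have hge := walk_height hw hni
          have ht2T : T0 < t2 := by
            have hne2 : ((u[i]'hir').1 : ℕ) ≠ ((u[0]'hr).1 : ℕ) := by
              intro hcon
              exact absurd (hnd i 0 hir' hr hcon) (by omega)
            rw [hchi] at hge
            omega
          refine ⟨(Z[i]'hizi).2, t2, i, by omega, hir, hizi, hir', hir', by omega,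
            rfl, ht2, hw2, ?_, Or.inr ht2T⟩
          intro e he
          by_cases heb : e = b
          · subst heb
            have hdd : W e (Z.drop (i+1)) = W e (Z.drop i) := by
              rw [hdropi, W_cons_ne _ _ _ hbb]
            cases hWbd : W e (Z.drop i) with
            | nil => right; left; rw [hdd, hWbd]
            | cons s l =>
              right; right
              refine ⟨i, hir', by omega, s, l, by rw [hdd, hWbd], ?_⟩
              rw [hWbd] at hw
              have hne3 : ((u[i-1]'hiu1).2 : ℕ) ≠ n + t := by
                rw [hchi, ← hJt]
                intro hcon
                exact absurd (hnd i J hir' hJu hcon) (by omega)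
              have := walk_head_start hne3 hw
              rw [this, hchi]
          · have htake : W e (Z.take (i+1)) = W e (Z.take i) := by
              rw [List.take_succ, List.getElem?_eq_getElem hizi]
              simp only [Option.toList_some]
              rw [W_append, W_cons_ne _ _ _ (fun h => he h.symm)]
              simp [W]
            have hdrop : W e (Z.drop i) = W e (Z.drop (i+1)) := by
              rw [hdropi, W_cons_ne _ _ _ (fun h => he h.symm)]
            rcases hC e heb with h | h | ⟨p, hp, hpi, s, l, hE, hs1⟩
            · left; rw [htake]; exact h
            · right; left; rw [← hdrop]; exact h
            · right; right; exact ⟨p, hp, by omega, s, l, by rw [← hdrop]; exact hE, hs1⟩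
  -- conclude from Inv u.length
  obtain ⟨b, t, J, hi0, hiu, hizZ, hiu1, hJu, hJ, hb, hJt, hw, hC, hbr⟩ :=
    hInv u.length (by omega) (le_refl u.length)
  rcases hbr with ⟨h1, h2, h3⟩ | h1
  · intro i hiz hiu'
    rw [h3 i hiz hiu']
  · exfalso
    rw [hcl hiu1 hr, hT0] at hw
    have := walk_height hw (by omega)
    omega

end Chase

section Core

variable [DecidableEq β]

lemma vf_append_cycle {u l : List (Step m)} (hcyc : IsDisjointCycle u)
    (h : VF m n (u ++ l)) : VF m n l := by
  obtain ⟨hne, hchain, hclose, -⟩ := hcyc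
  match u, hne with
  | s :: u', _ =>
    have h' : VF m n (s :: (u' ++ l)) := by simpa using h
    obtain ⟨t, hs, hok, hw⟩ := vf_cons h'
    have hc := List.isChain_cons.mp hchain
    have hw2 := walk_strip_chain u' (s.2 : ℕ) l t hc.2
      (fun x hx => by have := hc.1 x hx; exact congrArg Fin.val this.symm) hw
    refine ⟨t, ?_⟩
    cases hu' : u'.getLast? with
    | none =>
      have : u' = [] := by simpa using hu'
      subst this
      have hclose' := hclose s rfl s (by simp)
      have : ((s.2 : ℕ)) = n + t := by rw [congrArg Fin.val hclose', hs]
      rw [hu'] at hw2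
      simpa [this] using hw2
    | some z =>
      have hz : z ∈ (s :: u').getLast? := by
        cases u' with
        | nil => simp at hu'
        | cons y p' => rw [List.getLast?_cons_cons]; exact hu'
      have hclose' := hclose s rfl z hz
      have : ((z.2 : ℕ)) = n + t := by rw [congrArg Fin.val hclose', hs]
      rw [hu'] at hw2
      simpa [this] using hw2

lemma core : ∀ (U : List (List (Step m))) (Z : List (Step m × β)),
    (∀ v ∈ U, IsDisjointCycle v) → Z.map Prod.fst = U.flatten →
    (∀ b, VF m n (W b Z)) →
    ∀ (c : ℕ) (hc : c < U.length) (i j : ℕ) (hi : i < Z.length) (hj : j < Z.length),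
      ((U.take c).map List.length).sum ≤ i →
      i < ((U.take c).map List.length).sum + (U[c]).length →
      ((U.take c).map List.length).sum ≤ j →
      j < ((U.take c).map List.length).sum + (U[c]).length →
      (Z[i]).2 = (Z[j]).2
  | [], Z, _, _, _, c, hc, i, j, hi, hj, h1, h2, h3, h4 => absurd hc (by simp)
  | u :: U', Z, hU, hZ, hval, c, hc, i, j, hi, hj, h1, h2, h3, h4 => by
    have hcyc : IsDisjointCycle u := hU u (List.mem_cons_self)
    have hr : 0 < u.length := List.length_pos_iff.mpr hcyc.1
    have hlen : Z.length = u.length + U'.flatten.length := by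
      have := congrArg List.length hZ; simpa using this
    have h0 : 0 < Z.length := by omega
    have mono := first_block_mono u U'.flatten Z hcyc hZ hval h0
    cases c with
    | zero =>
      simp only [List.take_zero, List.map_nil, List.sum_nil, Nat.zero_add,
        List.getElem_cons_zero] at h2 h4
      rw [mono i hi h2, mono j hj h4]
    | succ c' =>
      have hc' : c' < U'.length := by simpa using hc
      -- the stripped instance
      set Z' := Z.drop u.length with hZ'def
      have hZ' : Z'.map Prod.fst = U'.flatten := by
        rw [hZ'def, List.map_drop, hZ, List.flatten_cons, List.drop_left]
      have hallb : ∀ x ∈ Z.take u.length, x.2 = (Z[0]'h0).2 := by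
        intro x hx
        obtain ⟨idx, hidx, hidx2⟩ := List.mem_iff_getElem.mp hx
        have hidxu : idx < u.length := by
          have := hidx; simp only [List.length_take] at this; omega
        have hidxz : idx < Z.length := by omega
        rw [← hidx2, List.getElem_take]
        exact mono idx hidxz hidxu
      have hval' : ∀ b, VF m n (W b Z') := by
        intro b
        have hsplit : W b Z = W b (Z.take u.length) ++ W b Z' := by
          conv_lhs => rw [← List.take_append_drop u.length Z]
          rw [W_append]
        by_cases hbb : b = (Z[0]'h0).2
        · have htk : W b (Z.take u.length) = u := by
            have hfil : (Z.take u.length).filter (fun x => x.2 = b) = Z.take u.length := by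
              apply List.filter_eq_self.mpr
              intro a ha
              simpa using (hallb a ha).trans hbb.symm
            rw [W, hfil, List.map_take, hZ, List.flatten_cons, List.take_left]
          have := hval b
          rw [hsplit, htk] at this
          exact vf_append_cycle hcyc this
        · have htk : W b (Z.take u.length) = [] := by
            have hfil : (Z.take u.length).filter (fun x => x.2 = b) = [] := by
              apply List.filter_eq_nil_iff.mpr
              intro a ha
              simp only [decide_eq_true_eq]
              intro hcon
              exact hbb (hcon.symm.trans (hallb a ha))
            rw [W, hfil]; rfl
          have := hval b
          rwa [hsplit, htk, List.nil_append] at this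
      -- index bookkeeping
      have hsum : ((List.take (c' + 1) (u :: U')).map List.length).sum =
          u.length + ((U'.take c').map List.length).sum := by
        simp [List.take_succ_cons]
      have hgetc : ((u :: U')[c' + 1]'hc) = U'[c']'hc' := rfl
      rw [hsum] at h1 h2 h3 h4
      rw [hgetc] at h2 h4
      have hi' : i - u.length < Z'.length := by
        rw [hZ'def, List.length_drop]; omega
      have hj' : j - u.length < Z'.length := by
        rw [hZ'def, List.length_drop]; omega
      have := core U' Z' (fun v hv => hU v (List.mem_cons_of_mem _ hv)) hZ' hval'
        c' hc' (i - u.length) (j - u.length) hi' hj' (by omega) (by omega) (by omega)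
        (by omega)
      have hzi : (Z'[i - u.length]'hi') = Z[i]'hi := by
        show ((Z.drop u.length)[i - u.length]'hi') = Z[i]'hi
        rw [List.getElem_drop]
        exact getElem_idx Z (by omega) _
      have hzj : (Z'[j - u.length]'hj') = Z[j]'hj := by
        show ((Z.drop u.length)[j - u.length]'hj') = Z[j]'hj
        rw [List.getElem_drop]
        exact getElem_idx Z (by omega) _
      rw [← hzi, ← hzj]
      exact this

end Core

section Bridge

lemma sum_take_ofFn {α : Type*} {k : ℕ} (u : Fin k → List α) :
    ∀ (d : ℕ), d ≤ k →
      (((List.ofFn u).take d).map List.length).sum =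
        ∑ c' ∈ Finset.univ.filter (fun c' : Fin k => (c' : ℕ) < d), (u c').length := by
  intro d
  induction d with
  | zero => simp
  | succ d ih =>
    intro hd
    have hdk : d < k := hd
    have h1 : (List.ofFn u).take (d+1) = (List.ofFn u).take d ++ [u ⟨d, hdk⟩] := by
      rw [List.take_succ, List.getElem?_eq_getElem (by simpa using hdk)]
      simp [List.getElem_ofFn]
    have h2 : Finset.univ.filter (fun c' : Fin k => (c' : ℕ) < d + 1) =
        insert ⟨d, hdk⟩ (Finset.univ.filter (fun c' : Fin k => (c' : ℕ) < d)) := by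
      ext x
      simp only [Finset.mem_filter, Finset.mem_insert, Finset.mem_univ, true_and]
      constructor
      · intro hx
        rcases Nat.lt_or_ge (x : ℕ) d with h | h
        · exact Or.inr h
        · exact Or.inl (Fin.ext (by simp only [Fin.val_mk]; omega))
      · rintro (rfl | hx)
        · simp only [Fin.val_mk]; omega
        · omega
    rw [h1, h2, List.map_append, List.sum_append, ih (by omega),
      Finset.sum_insert (by simp)]
    simp [Nat.add_comm]

end Bridge
end CF10

/-- Lemma 10.1-type statement: if a balanced sequence with disjoint cycle decomposition
`u₁ u₂ ⋯ u_k` is placed into `β` slots — i.e. each step is assigned a slot, the word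
read off in each slot is a term of `(det (I - C))⁻¹`, and the concatenation of the slot
words is Cartier–Foata congruent to the original sequence — then all steps of any single
cycle `u_c` are placed in the same slot. -/
theorem cycle_steps_in_same_slot (m n : ℕ) (hn : n < m) (β k : ℕ)
    (u : Fin k → List (Step m))
    (hu : ∀ c, IsDisjointCycle (u c)) :
    let L : List (Step m) := (List.ofFn u).flatten
    -- the sequence is balanced
    (∀ h : Fin m, (L.map Prod.fst).count h = (L.map Prod.snd).count h) →
    ∀ g : Fin L.length → Fin β,
      -- the word placed in each slot (the steps assigned to it, in order)
      (∀ b : Fin β,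
        ValidTerm m n
          (((List.finRange L.length).filter (fun p => g p = b)).map (fun p => L.get p))) →
      -- the concatenation over the slots reproduces the sequence modulo Cartier–Foata
      CFeq
        ((List.ofFn fun b : Fin β =>
          ((List.finRange L.length).filter (fun p => g p = b)).map
            (fun p => L.get p)).flatten) L →
      -- conclusion: the placement is constant on each cycle
      ∀ c : Fin k, ∀ p q : Fin L.length,
        (∑ c' ∈ Finset.univ.filter (· < c), (u c').length) ≤ (p : ℕ) →
        (p : ℕ) < (∑ c' ∈ Finset.univ.filter (· < c), (u c').length) + (u c).length →
        (∑ c' ∈ Finset.univ.filter (· < c), (u c').length) ≤ (q : ℕ) →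
        (q : ℕ) < (∑ c' ∈ Finset.univ.filter (· < c), (u c').length) + (u c).length →
        g p = g q := by
  intro L hbal g hslots hcf c p q hp1 hp2 hq1 hq2
  clear hbal hcf hn
  classical
  set Z : List (Step m × Fin β) :=
    (List.finRange L.length).map (fun p => (L.get p, g p)) with hZdef
  have hZlen : Z.length = L.length := by simp [hZdef]
  have hL : L = (List.ofFn u).flatten := rfl
  have hZmap : Z.map Prod.fst = (List.ofFn u).flatten := by
    rw [hZdef, List.map_map, ← hL]
    have : (Prod.fst ∘ fun p : Fin L.length => (L.get p, g p)) = L.get := rfl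
    rw [this, ← List.ofFn_eq_map, List.ofFn_get]
  have hW : ∀ b : Fin β, CF10.W b Z =
      ((List.finRange L.length).filter (fun p => g p = b)).map (fun p => L.get p) := by
    intro b
    rw [CF10.W, hZdef, List.filter_map, List.map_map]
    rfl
  have hval : ∀ b, CF10.VF m n (CF10.W b Z) := by
    intro b
    rw [hW b]
    exact CF10.vf_of_validTerm (hslots b)
  have hUmem : ∀ v ∈ List.ofFn u, IsDisjointCycle v := by
    intro v hv
    obtain ⟨i, rfl⟩ := Set.mem_range.mp ((List.mem_ofFn' u v).mp hv)
    exact hu i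
  have hc : (c : ℕ) < (List.ofFn u).length := by simpa using c.2
  have hsum : ∑ c' ∈ Finset.univ.filter (· < c), (u c').length =
      (((List.ofFn u).take (c : ℕ)).map List.length).sum := by
    rw [CF10.sum_take_ofFn u (c : ℕ) (le_of_lt c.2)]
    apply Finset.sum_congr _ (fun _ _ => rfl)
    apply Finset.filter_congr
    intro x _
    exact Iff.rfl
  have hgetc : ((List.ofFn u)[(c : ℕ)]'hc) = u c := by
    simp [List.getElem_ofFn]
  have hp : (p : ℕ) < Z.length := by rw [hZlen]; exact p.2
  have hq : (q : ℕ) < Z.length := by rw [hZlen]; exact q.2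
  have hcore := CF10.core (List.ofFn u) Z hUmem hZmap hval (c : ℕ) hc
    (p : ℕ) (q : ℕ) hp hq
    (by rw [← hsum]; exact hp1) (by rw [← hsum, hgetc]; exact hp2)
    (by rw [← hsum]; exact hq1) (by rw [← hsum, hgetc]; exact hq2)
  have hgp : ∀ (x : Fin L.length) (hx : (x : ℕ) < Z.length), (Z[(x : ℕ)]'hx).2 = g x := by
    intro x hx
    show ((((List.finRange L.length).map fun p => (L.get p, g p)))[(x : ℕ)]'hx).2 = g x
    rw [List.getElem_map, List.getElem_finRange]
    congr
  rw [← hgp p hp, ← hgp q hq]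
  exact hcore
end
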